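/- arXiv:2302.04772 — 3 statements merged into one kernel-verified Lean document; each statement's English description precedes it below -/
import Mathlib

section
/- Let R = 𝔽₂[c₂,…,cₙ] ⊆ S = 𝔽₂[τ, u₂,…,uₙ] via cᵢ ↦ τ^{i mod 2} uᵢ², and let θ₁,…,θ_{l-1} ∈ S be homogeneous elements such that θ₁,…,θ_{l-1}, together with any element mapping to them, generate an ideal I° of S. Then √(ι⁻¹(I°)) = √((τθ₁²,…,τθ_{l-1}²)) as ideals of R, where ι : R → S is the inclusion, provided τθᵢ² ∈ R for each i. -/
open MvPolynomial

/-- The inclusion `ι : 𝔽₂[c₂,…,cₙ] → 𝔽₂[τ,u₂,…,uₙ]`, `cᵢ ↦ τ^{i mod 2}uᵢ²`.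
The variable `none` is `τ` and `some i` is `u_{i+2}`; the variable `i : Fin (n-1)` on the
left is `c_{i+2}`, so the exponent of `τ` is `(i+2) % 2 = i % 2`. -/
noncomputable def chernIota (n : ℕ) :
    MvPolynomial (Fin (n - 1)) (ZMod 2) →+* MvPolynomial (Option (Fin (n - 1))) (ZMod 2) :=
  (MvPolynomial.aeval fun i : Fin (n - 1) =>
    (X none : MvPolynomial (Option (Fin (n - 1))) (ZMod 2)) ^ (i.val % 2) *
      X (some i) ^ 2).toRingHom

/-- The retraction-of-sorts `ψ : 𝔽₂[τ,u₂,…,uₙ] → 𝔽₂[c₂,…,cₙ]`, `τ ↦ 1`, `u_{i+2} ↦ c_{i+2}`.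
It satisfies `ψ ∘ ι = Frobenius`. -/
noncomputable def chernPsi (n : ℕ) :
    MvPolynomial (Option (Fin (n - 1))) (ZMod 2) →+* MvPolynomial (Fin (n - 1)) (ZMod 2) :=
  (MvPolynomial.aeval fun j : Option (Fin (n - 1)) =>
    j.elim (1 : MvPolynomial (Fin (n - 1)) (ZMod 2)) X).toRingHom

lemma chernPsi_X_none (n : ℕ) :
    chernPsi n (X none) = 1 := by
  simp [chernPsi]

lemma chernPsi_chernIota (n : ℕ) (p : MvPolynomial (Fin (n - 1)) (ZMod 2)) :
    chernPsi n (chernIota n p) = p ^ 2 := by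
  have h : (chernPsi n).comp (chernIota n) =
      frobenius (MvPolynomial (Fin (n - 1)) (ZMod 2)) 2 := by
    apply MvPolynomial.ringHom_ext
    · intro a
      have ha : a ^ 2 = a := by revert a; decide
      simp [chernPsi, chernIota, frobenius_def, ← C_pow, ha]
    · intro i
      simp [chernPsi, chernIota, frobenius_def]
  have := RingHom.congr_fun h p
  simpa [frobenius_def] using this

/-- Radical-ideal comparison underlying Corollary 4.13: for homogeneous `θ₁,…,θ_{l-1}` in
`S = 𝔽₂[τ,u₂,…,uₙ]` with `τθᵢ² = ι(ρᵢ)` for some `ρᵢ` in the Chern subring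
`R = 𝔽₂[c₂,…,cₙ]`, one has `√(ι⁻¹((θ₁,…,θ_{l-1}))) = √((ρ₁,…,ρ_{l-1}))` in `R`. -/
theorem stmt14 (n l : ℕ)
    (θ : Fin (l - 1) → MvPolynomial (Option (Fin (n - 1))) (ZMod 2))
    (hhom : ∀ i, ∃ d, (θ i).IsHomogeneous d)
    (ρ : Fin (l - 1) → MvPolynomial (Fin (n - 1)) (ZMod 2))
    (hρ : ∀ i, chernIota n (ρ i) = X none * θ i ^ 2) :
    (Ideal.comap (chernIota n) (Ideal.span (Set.range θ))).radical =
      (Ideal.span (Set.range ρ)).radical := by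
  -- `ψ(θ i)` is in the radical of `span ρ` since its square is `ρ i ^ 2`.
  have hpsiθ : ∀ i, chernPsi n (θ i) ∈ (Ideal.span (Set.range ρ)).radical := by
    intro i
    have hsq : chernPsi n (θ i) ^ 2 = ρ i ^ 2 := by
      have h1 := chernPsi_chernIota n (ρ i)
      rw [hρ i, map_mul, map_pow, chernPsi_X_none, one_mul] at h1
      exact h1
    refine Ideal.mem_radical_of_pow_mem (m := 2) ?_
    refine Ideal.le_radical ?_
    rw [hsq, pow_two]
    exact Ideal.mul_mem_left _ _ (Ideal.subset_span ⟨i, rfl⟩)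
  apply le_antisymm
  · rw [Ideal.radical_le_radical_iff]
    intro r hr
    rw [Ideal.mem_comap, Ideal.mem_span_range_iff_exists_fun] at hr
    obtain ⟨c, hc⟩ := hr
    refine Ideal.mem_radical_of_pow_mem (m := 2) ?_
    have h2 : r ^ 2 = ∑ i, chernPsi n (c i) * chernPsi n (θ i) := by
      rw [← chernPsi_chernIota n r, ← hc, map_sum]
      simp [map_mul]
    rw [h2]
    refine Ideal.sum_mem _ fun i _ => Ideal.mul_mem_left _ _ (hpsiθ i)
  · rw [Ideal.radical_le_radical_iff]
    refine le_trans ?_ Ideal.le_radical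
    rw [Ideal.span_le]
    rintro _ ⟨i, rfl⟩
    rw [SetLike.mem_coe, Ideal.mem_comap, hρ i]
    have h3 : (X none : MvPolynomial (Option (Fin (n - 1))) (ZMod 2)) * θ i ^ 2 =
        (X none * θ i) * θ i := by ring
    rw [h3]
    exact Ideal.mul_mem_left _ _ (Ideal.subset_span ⟨i, rfl⟩)
end

section
/- In the polynomial ring 𝔽₂[x₁,…,xₙ,y₁,…,yₙ], if B(x,y) = Σ_{i,j} b_{ij} xᵢyⱼ is a bilinear form whose right radical is zero (i.e. the matrix (b_{ij}) has trivial kernel acting on y), then B(x,y), B(x,y²), …, B(x,y^{2^{n-1}}) is a regular sequence of length n. -/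
open MvPolynomial

namespace Stmt15

set_option linter.unusedTactic false
set_option linter.unreachableTactic false
set_option linter.unnecessarySimpa false
set_option linter.unnecessarySeqFocus false

noncomputable section


def sp {A : Type*} [CommRing A] (c : ℕ → A) (m : ℕ) : Ideal A :=
  Ideal.span (Set.range fun t : Fin m => c t.val)

def Colon {A : Type*} [CommRing A] (c : ℕ → A) (m : ℕ) : Prop :=
  ∀ f : A, f * c m ∈ sp c m → f ∈ sp c m

lemma mem_sp_iff {A : Type*} [CommRing A] (c : ℕ → A) (m : ℕ) (x : A) :
    x ∈ sp c m ↔ ∃ g : Fin m → A, ∑ k, g k * c k.val = x :=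
  Ideal.mem_span_range_iff_exists_fun

lemma sp_le_sp {A : Type*} [CommRing A] (c : ℕ → A) {m m' : ℕ} (h : m ≤ m') :
    sp c m ≤ sp c m' :=
  Ideal.span_mono (by rintro x ⟨t, rfl⟩; exact ⟨⟨t.val, t.isLt.trans_le h⟩, rfl⟩)

lemma c_mem_sp {A : Type*} [CommRing A] (c : ℕ → A) {k m : ℕ} (h : k < m) :
    c k ∈ sp c m := Ideal.subset_span ⟨⟨k, h⟩, rfl⟩

theorem koszul {A : Type*} [CommRing A] (c : ℕ → A) (m : ℕ)
    (hreg : ∀ k < m, Colon c k) (g : Fin m → A) (hg : ∑ k, g k * c k.val = 0) :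
    ∃ a : Fin m → Fin m → A, (∀ k j, a k j = - a j k) ∧ (∀ k, a k k = 0) ∧
      ∀ k, g k = ∑ j, a k j * c j.val := by
  induction m with
  | zero => exact ⟨fun k j => 0, fun k => k.elim0, fun k => k.elim0, fun k => k.elim0⟩
  | succ m ih =>
    rw [Fin.sum_univ_castSucc] at hg
    simp only [Fin.coe_castSucc, Fin.val_last] at hg
    have hlast : g (Fin.last m) * c m ∈ sp c m := by
      have h1 : g (Fin.last m) * c m = - ∑ k : Fin m, g k.castSucc * c k.val :=
        eq_neg_of_add_eq_zero_right hg
      rw [h1]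
      refine neg_mem (Ideal.sum_mem _ fun k _ => Ideal.mul_mem_left _ _ (c_mem_sp c k.isLt))
    obtain ⟨b, hb⟩ := (mem_sp_iff c m _).mp (hreg m (Nat.lt_succ_self m) _ hlast)
    have hg' : ∑ k : Fin m, (g k.castSucc + b k * c m) * c k.val = 0 := by
      have h2 : ∑ k : Fin m, (g k.castSucc + b k * c m) * c k.val
          = (∑ k : Fin m, g k.castSucc * c k.val) + (∑ k : Fin m, b k * c k.val) * c m := by
        rw [Finset.sum_mul, ← Finset.sum_add_distrib]; congr 1; ext k; ring
      rw [h2, hb, hg]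
    obtain ⟨a', hskew', hdiag', ha'⟩ :=
      ih (fun k hk => hreg k (hk.trans (Nat.lt_succ_self m))) _ hg'
    classical
    set a : Fin (m+1) → Fin (m+1) → A := fun k j =>
      if hk : (k : ℕ) < m then
        (if hj : (j : ℕ) < m then a' ⟨k, hk⟩ ⟨j, hj⟩ else - b ⟨k, hk⟩)
      else (if hj : (j : ℕ) < m then b ⟨j, hj⟩ else 0) with ha_def
    have hskew : ∀ k j, a k j = - a j k := by
      intro k j
      by_cases hk : (k : ℕ) < m <;> by_cases hj : (j : ℕ) < m <;>
        simp only [ha_def, hk, hj, dif_pos, dif_neg, not_false_iff, neg_neg, neg_zero] <;>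
        first | exact hskew' _ _ | rfl
    refine ⟨a, hskew, ?_, ?_⟩
    · intro k
      by_cases hk : (k : ℕ) < m <;>
        simp only [ha_def, hk, dif_pos, dif_neg, not_false_iff] <;>
        first | exact hdiag' _ | rfl
    · intro k
      have hsplit : ∑ j, a k j * c j.val
          = (∑ j : Fin m, a k j.castSucc * c j.val) + a k (Fin.last m) * c m := by
        rw [Fin.sum_univ_castSucc]; simp
      induction k using Fin.lastCases with
      | last =>
        rw [hsplit]
        have h3 : ∀ j : Fin m, a (Fin.last m) j.castSucc = b j := by
          intro j
          simp only [ha_def]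
          rw [dif_neg (by simp), dif_pos (by simpa using j.isLt)]
          exact congrArg b (Fin.ext (by simp))
        have h4 : a (Fin.last m) (Fin.last m) = 0 := by
          simp only [ha_def]; rw [dif_neg (by simp), dif_neg (by simp)]
        rw [h4]
        simp only [h3, zero_mul, add_zero]
        rw [← hb]
      | cast k' =>
        rw [hsplit]
        have h5 : ∀ j : Fin m, a k'.castSucc j.castSucc = a' k' j := by
          intro j
          simp only [ha_def]
          rw [dif_pos (by simpa using k'.isLt), dif_pos (by simpa using j.isLt)]
          rfl
        have h6 : a k'.castSucc (Fin.last m) = - b k' := by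
          simp only [ha_def]
          rw [dif_pos (by simpa using k'.isLt), dif_neg (by simp)]
          rfl
        simp only [h5, h6]
        have h7 := ha' k'
        have : g k'.castSucc = (∑ j : Fin m, a' k' j * c j.val) - b k' * c m := by
          rw [← h7]; ring
        rw [this]; ring



lemma alt_sum_zero {A : Type*} [CommRing A] {m : ℕ} (a : Fin m → Fin m → A)
    (hskew : ∀ k j, a k j = - a j k) (hdiag : ∀ k, a k k = 0) (v : ℕ → A) :
    ∑ k : Fin m, ∑ j : Fin m, a k j * v j.val * v k.val = 0 := by
  classical
  rw [← Finset.sum_product']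
  apply Finset.sum_involution (fun p _ => (p.2, p.1))
  · intro p _
    rcases p with ⟨k, j⟩
    simp only
    rw [hskew k j]; ring
  · intro p _ h
    rcases p with ⟨k, j⟩
    intro hjk
    apply h
    have hkj : j = k := (Prod.mk.injEq _ _ _ _).mp hjk |>.1
    subst hkj
    rw [hdiag j]; ring
  · intro p _; exact Finset.mem_univ _
  · intro p _; rfl

theorem peel {A : Type*} [CommRing A] [IsDomain A] {m : ℕ} (CC cc : ℕ → A) (u : A)
    (hu : u ≠ 0) (π : A →+* A) (hππ : ∀ x, π (π x) = π x) (hπC : ∀ k, π (CC k) = cc k)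
    (hdvd : ∀ x, u ∣ x - π x) (hπu : π u = 0)
    (hsyz : ∀ g : Fin m → A, ∑ k, g k * cc k.val = 0 →
      ∃ a : Fin m → Fin m → A, (∀ k j, a k j = - a j k) ∧ (∀ k, a k k = 0) ∧
        ∀ k, g k = ∑ j, a k j * cc j.val)
    (h : A) (hh : u * h ∈ sp CC m) : h ∈ sp CC m := by
  obtain ⟨g, hg⟩ := (mem_sp_iff CC m _).mp hh
  have hπcc : ∀ k : ℕ, π (cc k) = cc k := fun k => by rw [← hπC, hππ, hπC]
  have hg0 : ∑ k : Fin m, π (g k) * cc k.val = 0 := by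
    have := congrArg π hg
    simp only [map_sum, map_mul, hπC] at this
    rw [this, hπu, zero_mul]
  obtain ⟨a, hskew, hdiag, ha⟩ := hsyz _ hg0
  set a' : Fin m → Fin m → A := fun k j => π (a k j) with ha'_def
  have hskew' : ∀ k j, a' k j = - a' j k := fun k j => by
    simp only [ha'_def, hskew k j, map_neg]
  have ha2 : ∀ k, π (g k) = ∑ j, a' k j * cc j.val := by
    intro k
    have := congrArg π (ha k)
    rw [hππ] at this
    simpa only [map_sum, map_mul, hπcc] using this
  -- g' k := g k - ∑ j, a' k j * CC j
  have hdvd' : ∀ k : Fin m, u ∣ g k - ∑ j, a' k j * CC j.val := by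
    intro k
    have hπg' : π (g k - ∑ j, a' k j * CC j.val) = 0 := by
      rw [map_sub, map_sum]
      simp only [map_mul, hπC]
      rw [ha2 k]
      have : ∀ j : Fin m, π (a' k j) = a' k j := fun j => by simp only [ha'_def, hππ]
      simp only [this, sub_self]
    have := hdvd (g k - ∑ j, a' k j * CC j.val)
    rwa [hπg', sub_zero] at this
  choose hf hhf using hdvd'
  -- now u * h = ∑ g k CC k = ∑ (u * hf k) CC k + ∑∑ a' k j CC j CC k
  have key : u * h = u * ∑ k, hf k * CC k.val := by
    rw [← hg]
    have expand : ∑ k : Fin m, g k * CC k.val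
        = ∑ k : Fin m, (u * hf k) * CC k.val + ∑ k, ∑ j, a' k j * CC j.val * CC k.val := by
      rw [← Finset.sum_add_distrib]
      congr 1; ext k
      have h8 := eq_add_of_sub_eq (hhf k)
      rw [h8, add_mul, Finset.sum_mul]
    have hdiag' : ∀ k, a' k k = 0 := fun k => by simp only [ha'_def, hdiag k, map_zero]
    rw [expand, alt_sum_zero a' hskew' hdiag' CC, add_zero, Finset.mul_sum]
    congr 1; ext k; ring
  have := mul_left_cancel₀ hu key
  rw [this]
  exact Ideal.sum_mem _ fun k _ => Ideal.mul_mem_left _ _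
    (Ideal.subset_span ⟨k, rfl⟩)

lemma X_sub_dvd {σ K : Type*} [DecidableEq σ] [CommRing K] (s : σ) (v : MvPolynomial σ K)
    (p : MvPolynomial σ K) :
    (X s - v) ∣ p - (aeval (Function.update X s v)) p := by
  induction p using MvPolynomial.induction_on with
  | C a => simp
  | add p q hp hq =>
    have : p + q - (aeval (Function.update X s v)) (p + q)
        = (p - (aeval (Function.update X s v)) p) + (q - (aeval (Function.update X s v)) q) := by
      rw [map_add]; ring
    rw [this]; exact dvd_add hp hq
  | mul_X p i hp =>
    rw [map_mul, aeval_X]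
    by_cases hi : i = s
    · subst hi
      rw [Function.update_self]
      have : p * X i - (aeval (Function.update X i v)) p * v
          = (p - (aeval (Function.update X i v)) p) * X i
            + (aeval (Function.update X i v)) p * (X i - v) := by ring
      rw [this]
      exact dvd_add (Dvd.dvd.mul_right hp _) (Dvd.dvd.mul_left (dvd_refl _) _)
    · rw [Function.update_of_ne hi]
      have : p * X i - (aeval (Function.update X s v)) p * X i
          = (p - (aeval (Function.update X s v)) p) * X i := by ring
      rw [this]
      exact Dvd.dvd.mul_right hp _



abbrev Rinf : Type := MvPolynomial (ℕ ⊕ ℕ) (ZMod 2)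

def XX (i : ℕ) : Rinf := X (Sum.inl i)
def YY (i : ℕ) : Rinf := X (Sum.inr i)

def Cp (n k : ℕ) : Rinf := ∑ i ∈ Finset.range n, XX i * YY i ^ (2 ^ k)

instance : CharP Rinf 2 := inferInstance

lemma zmod2_pow_pow (a : ZMod 2) (k : ℕ) : a ^ (2 ^ k) = a := by
  induction k with
  | zero => simp
  | succ k ih => rw [pow_succ, pow_mul, ih, ← ZMod.pow_card a]; norm_num

lemma rinf_add_self (x : Rinf) : x + x = 0 := CharTwo.add_self_eq_zero x

lemma rinf_neg (x : Rinf) : -x = x := CharTwo.neg_eq x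

lemma rinf_sum_pow (s : Finset ℕ) (f : ℕ → Rinf) (k : ℕ) :
    (∑ i ∈ s, f i) ^ (2 ^ k) = ∑ i ∈ s, f i ^ (2 ^ k) := sum_pow_char_pow (p := 2) (n := k) s f

lemma rinf_add_pow (a b : Rinf) (k : ℕ) : (a + b) ^ (2 ^ k) = a ^ (2 ^ k) + b ^ (2 ^ k) :=
  add_pow_char_pow a b 2 k

lemma alg_C (φ : Rinf →ₐ[ZMod 2] Rinf) (a : ZMod 2) : φ (C a) = C a := by
  rw [← MvPolynomial.algebraMap_eq]; exact φ.commutes a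

def vv (n : ℕ) (ε : ℕ → ZMod 2) : Rinf := ∑ i ∈ Finset.range n, C (ε i) * YY i

def uu (n : ℕ) (ε : ℕ → ZMod 2) : Rinf := YY n + vv n ε

def πe (n : ℕ) (ε : ℕ → ZMod 2) : Rinf →ₐ[ZMod 2] Rinf :=
  aeval (Function.update X (Sum.inr n) (vv n ε))

def ττ (n : ℕ) (ε : ℕ → ZMod 2) : Rinf →ₐ[ZMod 2] Rinf :=
  aeval (fun s => match s with
    | Sum.inl i => if i = n then XX n else XX i + C (ε i) * XX n
    | Sum.inr j => YY j)

def πX (n : ℕ) : Rinf →ₐ[ZMod 2] Rinf :=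
  aeval (Function.update X (Sum.inl n) 0)

lemma πe_X (n : ℕ) (ε : ℕ → ZMod 2) (i : ℕ) : πe n ε (XX i) = XX i := by
  rw [πe, XX, aeval_X, Function.update_of_ne (by simp)]

lemma πe_Y_ne (n : ℕ) (ε : ℕ → ZMod 2) {i : ℕ} (h : i ≠ n) : πe n ε (YY i) = YY i := by
  rw [πe, YY, aeval_X, Function.update_of_ne (by simp [h])]

lemma πe_Y (n : ℕ) (ε : ℕ → ZMod 2) : πe n ε (YY n) = vv n ε := by
  rw [πe, YY, aeval_X, Function.update_self]

lemma πe_vv (n : ℕ) (ε ε' : ℕ → ZMod 2) : πe n ε (vv n ε') = vv n ε' := by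
  rw [vv, map_sum]
  refine Finset.sum_congr rfl fun i hi => ?_
  rw [map_mul, alg_C, πe_Y_ne n ε (Finset.mem_range.mp hi).ne]

lemma πe_idem (n : ℕ) (ε : ℕ → ZMod 2) (x : Rinf) : πe n ε (πe n ε x) = πe n ε x := by
  have : (πe n ε).comp (πe n ε) = πe n ε := by
    apply MvPolynomial.algHom_ext
    intro s
    rcases s with i | j
    · show πe n ε (πe n ε (XX i)) = πe n ε (XX i)
      rw [πe_X, πe_X]
    · by_cases hj : j = n
      · show πe n ε (πe n ε (YY j)) = πe n ε (YY j)
        rw [hj, πe_Y, πe_vv]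
      · show πe n ε (πe n ε (YY j)) = πe n ε (YY j)
        rw [πe_Y_ne n ε hj, πe_Y_ne n ε hj]
  exact congrFun (congrArg DFunLike.coe this) x

lemma πe_uu (n : ℕ) (ε : ℕ → ZMod 2) : πe n ε (uu n ε) = 0 := by
  rw [uu, map_add, πe_Y, πe_vv, rinf_add_self]

lemma uu_dvd (n : ℕ) (ε : ℕ → ZMod 2) (x : Rinf) : uu n ε ∣ x - πe n ε x := by
  have h := X_sub_dvd (Sum.inr n) (vv n ε) x
  have : (X (Sum.inr n) - vv n ε : Rinf) = uu n ε := by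
    rw [sub_eq_add_neg, rinf_neg]; rfl
  rwa [this] at h


lemma uu_ne_zero (n : ℕ) (ε : ℕ → ZMod 2) : uu n ε ≠ 0 := by
  intro h
  have h1 : coeff (Finsupp.single (Sum.inr n) 1) (uu n ε) = 1 := by
    rw [uu, vv, coeff_add, coeff_sum]
    have h2 : coeff (Finsupp.single (Sum.inr n) 1) (YY n) = 1 := by
      rw [YY, coeff_X, if_pos rfl]
    have h3 : ∀ i ∈ Finset.range n,
        coeff (Finsupp.single (Sum.inr n) 1) (C (ε i) * YY i) = 0 := by
      intro i hi
      rw [YY, coeff_C_mul, coeff_X']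
      rw [if_neg, mul_zero]
      intro hc
      have := (Finsupp.single_left_injective (by norm_num : (1:ℕ) ≠ 0)) hc
      exact (Finset.mem_range.mp hi).ne (Sum.inr_injective this)
    rw [h2, Finset.sum_congr rfl h3, Finset.sum_const_zero, add_zero]
  rw [h, coeff_zero] at h1
  exact one_ne_zero h1.symm

lemma ττ_X_ne (n : ℕ) (ε : ℕ → ZMod 2) {i : ℕ} (h : i ≠ n) :
    ττ n ε (XX i) = XX i + C (ε i) * XX n := by
  simp only [ττ, XX]
  rw [aeval_X]
  simp only [h, if_false]

lemma ττ_X_eq (n : ℕ) (ε : ℕ → ZMod 2) : ττ n ε (XX n) = XX n := by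
  simp only [ττ, XX]
  rw [aeval_X]
  simp only [if_true]

lemma ττ_Y (n : ℕ) (ε : ℕ → ZMod 2) (j : ℕ) : ττ n ε (YY j) = YY j := by
  simp only [ττ, YY]
  rw [aeval_X]

lemma ττ_invol (n : ℕ) (ε : ℕ → ZMod 2) (x : Rinf) : ττ n ε (ττ n ε x) = x := by
  have : (ττ n ε).comp (ττ n ε) = AlgHom.id (ZMod 2) Rinf := by
    apply MvPolynomial.algHom_ext
    intro s
    rcases s with i | j
    · show ττ n ε (ττ n ε (XX i)) = XX i
      by_cases hi : i = n
      · rw [hi, ττ_X_eq, ττ_X_eq]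
      · rw [ττ_X_ne n ε hi, map_add, map_mul, ττ_X_ne n ε hi, alg_C, ττ_X_eq,
          add_assoc, rinf_add_self, add_zero]
    · show ττ n ε (ττ n ε (YY j)) = YY j
      rw [ττ_Y, ττ_Y]
  exact congrFun (congrArg DFunLike.coe this) x

lemma vv_pow (n k : ℕ) (ε : ℕ → ZMod 2) :
    vv n ε ^ (2 ^ k) = ∑ i ∈ Finset.range n, C (ε i) * YY i ^ (2 ^ k) := by
  rw [vv, rinf_sum_pow]
  refine Finset.sum_congr rfl fun i _ => ?_
  rw [mul_pow, ← map_pow, zmod2_pow_pow]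

lemma πe_Cp (n k : ℕ) (ε : ℕ → ZMod 2) : πe n ε (Cp (n+1) k) = ττ n ε (Cp n k) := by
  rw [Cp, Cp, map_sum, map_sum, Finset.sum_range_succ]
  have h1 : ∀ i ∈ Finset.range n, πe n ε (XX i * YY i ^ 2 ^ k) = XX i * YY i ^ 2 ^ k := by
    intro i hi
    rw [map_mul, map_pow, πe_X, πe_Y_ne n ε (Finset.mem_range.mp hi).ne]
  have h2 : ∀ i ∈ Finset.range n, ττ n ε (XX i * YY i ^ 2 ^ k)
      = XX i * YY i ^ 2 ^ k + C (ε i) * XX n * YY i ^ 2 ^ k := by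
    intro i hi
    rw [map_mul, map_pow, ττ_X_ne n ε (Finset.mem_range.mp hi).ne, ττ_Y, add_mul]
  rw [Finset.sum_congr rfl h1, Finset.sum_congr rfl h2, map_mul, map_pow, πe_X, πe_Y,
    vv_pow, Finset.sum_add_distrib, Finset.mul_sum]
  congr 1
  refine Finset.sum_congr rfl fun i _ => ?_
  ring

lemma πX_X_eq (n : ℕ) : πX n (XX n) = 0 := by
  rw [πX, XX, aeval_X, Function.update_self]

lemma πX_X_ne (n : ℕ) {i : ℕ} (h : i ≠ n) : πX n (XX i) = XX i := by
  rw [πX, XX, aeval_X, Function.update_of_ne (by simp [h])]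

lemma πX_Y (n : ℕ) (j : ℕ) : πX n (YY j) = YY j := by
  rw [πX, YY, aeval_X, Function.update_of_ne (by simp)]

lemma πX_idem (n : ℕ) (x : Rinf) : πX n (πX n x) = πX n x := by
  have : (πX n).comp (πX n) = πX n := by
    apply MvPolynomial.algHom_ext
    intro s
    rcases s with i | j
    · by_cases hi : i = n
      · show πX n (πX n (XX i)) = πX n (XX i)
        rw [hi, πX_X_eq, map_zero]
      · show πX n (πX n (XX i)) = πX n (XX i)
        rw [πX_X_ne n hi, πX_X_ne n hi]
    · show πX n (πX n (YY j)) = πX n (YY j)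
      rw [πX_Y, πX_Y]
  exact congrFun (congrArg DFunLike.coe this) x

lemma πX_Cp (n k : ℕ) : πX n (Cp (n+1) k) = Cp n k := by
  rw [Cp, Cp, map_sum, Finset.sum_range_succ]
  have h1 : ∀ i ∈ Finset.range n, πX n (XX i * YY i ^ 2 ^ k) = XX i * YY i ^ 2 ^ k := by
    intro i hi
    rw [map_mul, map_pow, πX_X_ne n (Finset.mem_range.mp hi).ne, πX_Y]
  rw [Finset.sum_congr rfl h1, map_mul, πX_X_eq, zero_mul, add_zero]

lemma XX_dvd (n : ℕ) (x : Rinf) : XX n ∣ x - πX n x := by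
  have h := X_sub_dvd (Sum.inl n) (0 : Rinf) x
  rwa [sub_zero] at h

lemma XX_ne_zero (n : ℕ) : XX n ≠ 0 := MvPolynomial.X_ne_zero _

/-- coefficients of the iterated "additive" polynomials. -/
def cQ : ℕ → ℕ → Rinf
  | 0 => fun k => if k = 0 then 1 else 0
  | (m+1) => fun k =>
      match k with
      | 0 => (∑ j ∈ Finset.range (m+1), cQ m j * YY m ^ (2 ^ j)) * cQ m 0
      | (k+1) => (cQ m k) ^ 2 + (∑ j ∈ Finset.range (m+1), cQ m j * YY m ^ (2 ^ j)) * cQ m (k+1)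

/-- the additive polynomial `φ_m(t) = ∑_{k ≤ m} Q_{m,k} t^{2^k}`, as a function. -/
def φf (m : ℕ) (t : Rinf) : Rinf := ∑ k ∈ Finset.range (m+1), cQ m k * t ^ (2 ^ k)

lemma cQ_succ_zero (m : ℕ) : cQ (m+1) 0 = φf m (YY m) * cQ m 0 := rfl

lemma cQ_succ_succ (m k : ℕ) :
    cQ (m+1) (k+1) = (cQ m k) ^ 2 + φf m (YY m) * cQ m (k+1) := rfl

lemma cQ_gt (m : ℕ) : ∀ k, m < k → cQ m k = 0 := by
  induction m with
  | zero => intro k hk; cases k with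
    | zero => exact absurd hk (by omega)
    | succ k => simp [cQ]
  | succ m ih =>
    intro k hk
    cases k with
    | zero => exact absurd hk (by omega)
    | succ k =>
      rw [cQ_succ_succ, ih k (by omega), ih (k+1) (by omega), mul_zero, add_zero,
        sq, zero_mul]

lemma cQ_top (m : ℕ) : cQ m m = 1 := by
  induction m with
  | zero => simp [cQ]
  | succ m ih =>
    rw [cQ_succ_succ, ih, cQ_gt m (m+1) (by omega), mul_zero, add_zero, one_pow]

lemma rinf_sum_sq (s : Finset ℕ) (f : ℕ → Rinf) :
    (∑ i ∈ s, f i) ^ 2 = ∑ i ∈ s, f i ^ 2 := sum_pow_char (p := 2) s f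

lemma φ_succ (m : ℕ) (t : Rinf) :
    φf (m+1) t = (φf m t) ^ 2 + φf m (YY m) * φf m t := by
  rw [φf, Finset.sum_range_succ']
  have h0 : cQ (m+1) 0 * t ^ (2 ^ 0) = φf m (YY m) * (cQ m 0 * t ^ (2 ^ 0)) := by
    rw [cQ_succ_zero]; ring
  have h1 : ∀ k, cQ (m+1) (k+1) * t ^ (2 ^ (k+1))
      = (cQ m k * t ^ (2 ^ k)) ^ 2 + φf m (YY m) * (cQ m (k+1) * t ^ (2 ^ (k+1))) := by
    intro k
    have he : (2:ℕ) ^ (k+1) = 2 ^ k * 2 := pow_succ 2 k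
    rw [cQ_succ_succ, he, pow_mul]
    ring
  rw [h0, Finset.sum_congr rfl (fun k _ => h1 k), Finset.sum_add_distrib]
  rw [← rinf_sum_sq]
  have h2 : ∑ k ∈ Finset.range (m+1), φf m (YY m) * (cQ m (k+1) * t ^ 2 ^ (k+1))
      = φf m (YY m) * ∑ k ∈ Finset.range (m+1), cQ m (k+1) * t ^ 2 ^ (k+1) := by
    rw [Finset.mul_sum]
  rw [h2]
  have h4 : (∑ k ∈ Finset.range (m+1), cQ m (k+1) * t ^ 2 ^ (k+1))
      + cQ m 0 * t ^ (2 ^ 0) = φf m t := by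
    rw [← Finset.sum_range_succ' (fun k => cQ m k * t ^ 2 ^ k) (m+1),
      Finset.sum_range_succ, cQ_gt m (m+1) (by omega), zero_mul, add_zero]
    rfl
  rw [add_assoc, ← mul_add, h4]
  rfl

lemma φ_add (m : ℕ) (a b : Rinf) : φf m (a + b) = φf m a + φf m b := by
  rw [φf, φf, φf, ← Finset.sum_add_distrib]
  refine Finset.sum_congr rfl fun k _ => ?_
  rw [rinf_add_pow, mul_add]

lemma φ_zero_apply (t : Rinf) : φf 0 t = t := by
  simp [φf, cQ]

lemma φ_Y (m : ℕ) : ∀ i, i < m → φf m (YY i) = 0 := by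
  induction m with
  | zero => intro i hi; exact absurd hi (by omega)
  | succ m ih =>
    intro i hi
    rw [φ_succ]
    rcases Nat.lt_succ_iff_lt_or_eq.mp hi with h | h
    · rw [ih i h]; ring
    · subst h
      rw [sq]
      exact rinf_add_self _

lemma YY_pow_homog (i k : ℕ) : (YY i ^ (2 ^ k) : Rinf).IsHomogeneous (2 ^ k) := by
  have h := (isHomogeneous_X (ZMod 2) (Sum.inr i : ℕ ⊕ ℕ)).pow (2 ^ k)
  simpa [YY, one_mul] using h

lemma Cp_homog (n k : ℕ) : (Cp n k).IsHomogeneous (1 + 2 ^ k) := by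
  rw [Cp]
  apply MvPolynomial.IsHomogeneous.sum
  intro i _
  exact (isHomogeneous_X (ZMod 2) (Sum.inl i : ℕ ⊕ ℕ)).mul (YY_pow_homog i k)

/-- key component formula: component of a product with a homogeneous factor. -/
lemma hc_mul {e : ℕ} {c : Rinf} (hcc : c.IsHomogeneous e) (g : Rinf) (d : ℕ) :
    homogeneousComponent d (g * c)
      = if e ≤ d then homogeneousComponent (d - e) g * c else 0 := by
  classical
  conv_lhs => rw [← sum_homogeneousComponent g]
  rw [Finset.sum_mul, map_sum]
  have hterm : ∀ i : ℕ, homogeneousComponent d (homogeneousComponent i g * c)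
      = if d = i + e then homogeneousComponent i g * c else 0 := by
    intro i
    exact homogeneousComponent_of_mem
      ((mem_homogeneousSubmodule _ _).mpr
        ((homogeneousComponent_isHomogeneous i g).mul hcc))
  rw [Finset.sum_congr rfl fun i _ => hterm i]
  by_cases he : e ≤ d
  · rw [if_pos he]
    have hcond : ∀ i : ℕ, (d = i + e) ↔ (i = d - e) := by intro i; omega
    have : ∀ i ∈ Finset.range (g.totalDegree + 1),
        (if d = i + e then homogeneousComponent i g * c else 0)
        = if i = d - e then homogeneousComponent i g * c else 0 := by
      intro i _
      simp only [hcond i]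
    rw [Finset.sum_congr rfl this, Finset.sum_ite_eq' (Finset.range (g.totalDegree + 1))]
    by_cases hd : d - e ∈ Finset.range (g.totalDegree + 1)
    · rw [if_pos hd]
    · rw [if_neg hd]
      have : homogeneousComponent (d - e) g = 0 :=
        homogeneousComponent_eq_zero _ _ (by
          simp only [Finset.mem_range, not_lt] at hd; omega)
      rw [this, zero_mul]
  · rw [if_neg he]
    apply Finset.sum_eq_zero
    intro i _
    rw [if_neg (by omega)]

lemma hc_mem_sp (n m d : ℕ) (f : Rinf) (hf : f ∈ sp (Cp n) m) :
    homogeneousComponent d f ∈ sp (Cp n) m := by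
  obtain ⟨g, hg⟩ := (mem_sp_iff (Cp n) m f).mp hf
  rw [← hg, map_sum]
  refine Ideal.sum_mem _ fun k _ => ?_
  rw [hc_mul (Cp_homog n k.val) (g k) d]
  by_cases h : 1 + 2 ^ (k : ℕ) ≤ d
  · rw [if_pos h]
    exact Ideal.mul_mem_left _ _ (c_mem_sp (Cp n) k.isLt)
  · rw [if_neg h]; exact zero_mem _

lemma sp_map {A B : Type*} [CommRing A] [CommRing B] (φ : A →+* B) (c : ℕ → A) (c' : ℕ → B)
    (m : ℕ) (hφ : ∀ k, k < m → φ (c k) = c' k)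
    {x : A} (hx : x ∈ sp c m) : φ x ∈ sp c' m := by
  obtain ⟨g, hg⟩ := (mem_sp_iff c m x).mp hx
  rw [← hg, map_sum]
  refine Ideal.sum_mem _ fun k _ => ?_
  rw [map_mul, hφ k.val k.isLt]
  exact Ideal.mul_mem_left _ _ (c_mem_sp c' k.isLt)

lemma vv_zero (n : ℕ) : vv n (fun _ => 0) = 0 := by
  rw [vv]
  refine Finset.sum_eq_zero fun i _ => ?_
  rw [map_zero, zero_mul]

lemma uu_zero (n : ℕ) : uu n (fun _ => 0) = YY n := by
  rw [uu, vv_zero, add_zero]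

lemma ττ_zero (n : ℕ) (x : Rinf) : ττ n (fun _ => 0) x = x := by
  have : ττ n (fun _ => 0) = AlgHom.id (ZMod 2) Rinf := by
    apply MvPolynomial.algHom_ext
    intro s
    rcases s with i | j
    · show ττ n (fun _ => 0) (XX i) = XX i
      by_cases hi : i = n
      · rw [hi, ττ_X_eq]
      · rw [ττ_X_ne n _ hi, map_zero, zero_mul, add_zero]
    · show ττ n (fun _ => 0) (YY j) = YY j
      exact ττ_Y n _ j
  rw [this]; rfl

lemma πe_fix_Cp (n k : ℕ) (ε : ℕ → ZMod 2) : πe n ε (Cp n k) = Cp n k := by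
  rw [Cp, map_sum]
  refine Finset.sum_congr rfl fun i hi => ?_
  rw [map_mul, map_pow, πe_X, πe_Y_ne n ε (Finset.mem_range.mp hi).ne]

/-- The fundamental identity `C_{n} = X_n·φ_n(Y_n) - ∑_{k<n} Q_k C_k` (on `n+1` pairs). -/
lemma Cp_ID (n : ℕ) : Cp (n+1) n
    = XX n * φf n (YY n) - ∑ k ∈ Finset.range n, cQ n k * Cp (n+1) k := by
  have swap : ∑ k ∈ Finset.range (n+1), cQ n k * Cp (n+1) k
      = ∑ i ∈ Finset.range (n+1), XX i * φf n (YY i) := by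
    simp_rw [Cp, φf, Finset.mul_sum]
    rw [Finset.sum_comm]
    refine Finset.sum_congr rfl fun i _ => ?_
    refine Finset.sum_congr rfl fun k _ => ?_
    ring
  have hvan : ∑ i ∈ Finset.range (n+1), XX i * φf n (YY i) = XX n * φf n (YY n) := by
    rw [Finset.sum_range_succ]
    have : ∀ i ∈ Finset.range n, XX i * φf n (YY i) = 0 := by
      intro i hi
      rw [φ_Y n i (Finset.mem_range.mp hi), mul_zero]
    rw [Finset.sum_congr rfl this, Finset.sum_const_zero, zero_add]
  have hsplit : ∑ k ∈ Finset.range (n+1), cQ n k * Cp (n+1) k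
      = (∑ k ∈ Finset.range n, cQ n k * Cp (n+1) k) + Cp (n+1) n := by
    rw [Finset.sum_range_succ, cQ_top, one_mul]
  have key : (∑ k ∈ Finset.range n, cQ n k * Cp (n+1) k) + Cp (n+1) n
      = XX n * φf n (YY n) := hsplit.symm.trans (swap.trans hvan)
  have := eq_sub_of_add_eq (add_comm (∑ k ∈ Finset.range n, cQ n k * Cp (n+1) k)
    (Cp (n+1) n) ▸ key)
  exact this

lemma hc_of_homog {f : Rinf} {d : ℕ} (hf : f.IsHomogeneous d) :
    homogeneousComponent d f = f := by
  rw [homogeneousComponent_of_mem ((mem_homogeneousSubmodule _ _).mpr hf), if_pos rfl]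

/-- Peel off a linear form `u_ε = Y_n + ∑_{i<n} ε_i Y_i`. -/
lemma peel_Y (n l : ℕ) (hl : l ≤ n) (ih : ∀ k < n, Colon (Cp n) k) (ε : ℕ → ZMod 2)
    (h : Rinf) (hh : uu n ε * h ∈ sp (Cp (n+1)) l) : h ∈ sp (Cp (n+1)) l := by
  refine peel (Cp (n+1)) (fun k => ττ n ε (Cp n k)) (uu n ε) (uu_ne_zero n ε)
    (πe n ε).toRingHom (πe_idem n ε) (fun k => πe_Cp n k ε) (uu_dvd n ε) (πe_uu n ε)
    ?_ h hh
  intro g hg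
  have hg2 : ∑ k : Fin l, ττ n ε (g k) * Cp n k.val = 0 := by
    have := congrArg (ττ n ε) hg
    rw [map_sum, map_zero] at this
    rw [← this]
    refine Finset.sum_congr rfl fun k _ => ?_
    rw [map_mul, ττ_invol]
  obtain ⟨a, hskew, hdiag, ha⟩ := koszul (fun k => Cp n k) l
    (fun k hk => ih k (hk.trans_le hl)) _ hg2
  refine ⟨fun k j => ττ n ε (a k j),
    fun k j => by show ττ n ε (a k j) = - ττ n ε (a j k); rw [hskew k j, map_neg],
    fun k => by show ττ n ε (a k k) = 0; rw [hdiag k, map_zero], fun k => ?_⟩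
  have := congrArg (ττ n ε) (ha k)
  rw [map_sum, ττ_invol] at this
  rw [this]
  refine Finset.sum_congr rfl fun j _ => ?_
  rw [map_mul]

/-- Peel off the variable `X_n`. -/
lemma peel_X (n l : ℕ) (hl : l ≤ n) (ih : ∀ k < n, Colon (Cp n) k)
    (h : Rinf) (hh : XX n * h ∈ sp (Cp (n+1)) l) : h ∈ sp (Cp (n+1)) l := by
  refine peel (Cp (n+1)) (fun k => Cp n k) (XX n) (XX_ne_zero n)
    (πX n).toRingHom (πX_idem n) (fun k => πX_Cp n k) (XX_dvd n) (πX_X_eq n)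
    ?_ h hh
  intro g hg
  exact koszul (fun k => Cp n k) l (fun k hk => ih k (hk.trans_le hl)) _ hg

lemma φ_split (m : ℕ) (t : Rinf) : φf (m+1) t = φf m t * φf m (t + YY m) := by
  rw [φ_succ, φ_add]; ring

lemma uu_update (n m : ℕ) (hm : m < n) (ε : ℕ → ZMod 2) :
    uu n ε + YY m = uu n (Function.update ε m (ε m + 1)) := by
  rw [uu, uu, add_assoc]
  congr 1
  rw [vv, vv]
  have hterm : ∀ i ∈ Finset.range n,
      C (Function.update ε m (ε m + 1) i) * YY i
        = C (ε i) * YY i + (if i = m then YY m else 0) := by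
    intro i _
    by_cases hi : i = m
    · subst hi
      rw [Function.update_self, map_add, map_one, add_mul, one_mul, if_pos rfl]
    · rw [Function.update_of_ne hi, if_neg hi, add_zero]
  rw [Finset.sum_congr rfl hterm, Finset.sum_add_distrib,
    Finset.sum_ite_eq' (Finset.range n) m, if_pos (Finset.mem_range.mpr hm), add_comm]

lemma nzd_φ (n : ℕ) (ih : ∀ k < n, Colon (Cp n) k) :
    ∀ m, m ≤ n → ∀ (ε : ℕ → ZMod 2) (g : Rinf),
      g * φf m (uu n ε) ∈ sp (Cp (n+1)) n → g ∈ sp (Cp (n+1)) n := by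
  intro m
  induction m with
  | zero =>
    intro _ ε g hg
    rw [φ_zero_apply] at hg
    exact peel_Y n n le_rfl ih ε g (by rwa [mul_comm])
  | succ m ihm =>
    intro hm ε g hg
    have hmn : m < n := by omega
    rw [φ_split, uu_update n m hmn ε] at hg
    set ε' := Function.update ε m (ε m + 1)
    have h1 : (g * φf m (uu n ε')) * φf m (uu n ε) ∈ sp (Cp (n+1)) n := by
      rw [show (g * φf m (uu n ε')) * φf m (uu n ε)
        = g * (φf m (uu n ε) * φf m (uu n ε')) by ring]
      exact hg
    exact ihm (by omega) ε' g (ihm (by omega) ε _ h1)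

lemma top_step (n : ℕ) (ih : ∀ k < n, Colon (Cp n) k) : Colon (Cp (n+1)) n := by
  intro f hf
  have hsum : f * (∑ k ∈ Finset.range n, cQ n k * Cp (n+1) k) ∈ sp (Cp (n+1)) n := by
    rw [Finset.mul_sum]
    refine Ideal.sum_mem _ fun k hk => ?_
    rw [show f * (cQ n k * Cp (n+1) k) = (f * cQ n k) * Cp (n+1) k by ring]
    exact Ideal.mul_mem_left _ _ (c_mem_sp (Cp (n+1)) (Finset.mem_range.mp hk))
  have h1 : XX n * (f * φf n (YY n)) ∈ sp (Cp (n+1)) n := by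
    have heq : XX n * (f * φf n (YY n))
        = f * Cp (n+1) n + f * (∑ k ∈ Finset.range n, cQ n k * Cp (n+1) k) := by
      rw [Cp_ID n]; ring
    rw [heq]
    exact add_mem hf hsum
  have h2 : f * φf n (YY n) ∈ sp (Cp (n+1)) n := peel_X n n le_rfl ih _ h1
  refine nzd_φ n ih n le_rfl (fun _ => 0) f ?_
  rwa [uu_zero]

lemma lower_homog (n m : ℕ) (hm : m < n) (ih : ∀ k < n, Colon (Cp n) k) :
    ∀ d f, f.IsHomogeneous d → f * Cp (n+1) m ∈ sp (Cp (n+1)) m →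
      f ∈ sp (Cp (n+1)) m := by
  intro d
  induction d using Nat.strong_induction_on with
  | _ d ihd =>
  intro f hf hmem
  have hπCp : ∀ k, k < m → (πe n (fun _ => 0)).toRingHom (Cp (n+1) k) = Cp n k := by
    intro k _
    show πe n (fun _ => 0) (Cp (n+1) k) = Cp n k
    rw [πe_Cp, ττ_zero]
  have hπCpm : πe n (fun _ => 0) (Cp (n+1) m) = Cp n m := by
    rw [πe_Cp, ττ_zero]
  have toRH : ∀ x : Rinf, (πe n (fun _ => 0)).toRingHom x = πe n (fun _ => 0) x :=
    fun _ => rfl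
  have h1 : πe n (fun _ => 0) f * Cp n m ∈ sp (Cp n) m := by
    have h0 := sp_map (πe n (fun _ => 0)).toRingHom (Cp (n+1)) (Cp n) m hπCp hmem
    rw [toRH, map_mul, hπCpm] at h0
    exact h0
  have h2 : πe n (fun _ => 0) f ∈ sp (Cp n) m := ih m hm _ h1
  obtain ⟨b, hb⟩ := (mem_sp_iff _ _ _).mp h2
  set π := πe n (fun _ => 0) with hπ
  set F := f - ∑ k : Fin m, π (b k) * Cp (n+1) k with hFdef
  have hπF : π F = 0 := by
    rw [hFdef, map_sub, map_sum]
    have hterm : ∀ k : Fin m, π (π (b k) * Cp (n+1) k) = π (b k) * Cp n k.val := by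
      intro k
      rw [map_mul, πe_idem, πe_Cp, ττ_zero]
    rw [Finset.sum_congr rfl (fun k _ => hterm k)]
    have hπb : π f = ∑ k : Fin m, π (b k) * Cp n k.val := by
      have h3 := congrArg π hb
      rw [map_sum] at h3
      have hterm2 : ∀ k : Fin m, π (b k * Cp n k.val) = π (b k) * Cp n k.val := by
        intro k
        rw [map_mul, πe_fix_Cp]
      rw [Finset.sum_congr rfl (fun k _ => hterm2 k)] at h3
      have h3' : π (π f) = π f := πe_idem n (fun _ => 0) f
      rw [h3'] at h3
      exact h3.symm
    rw [← hπb, sub_self]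
  have hdvdF : YY n ∣ F := by
    have h4 := uu_dvd n (fun _ => 0) F
    rw [← hπ, hπF, sub_zero, uu_zero] at h4
    exact h4
  obtain ⟨f₁, hf₁⟩ := hdvdF
  have hfd : f = (∑ k : Fin m, π (b k) * Cp (n+1) k) + YY n * f₁ := by
    rw [← hf₁]
    rw [hFdef]
    ring
  set f₁' := homogeneousComponent (d - 1) f₁ with hf₁'def
  have hYhomog : (YY n : Rinf).IsHomogeneous 1 := isHomogeneous_X _ _
  have hdecomp : f = (∑ k : Fin m, homogeneousComponent d (π (b k) * Cp (n+1) k))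
      + (if 1 ≤ d then YY n * f₁' else 0) := by
    have h5 : homogeneousComponent d f = f := hc_of_homog hf
    have h6 := congrArg (homogeneousComponent d) hfd
    rw [h5, map_add, map_sum] at h6
    have h7 : homogeneousComponent d (YY n * f₁)
        = if 1 ≤ d then YY n * f₁' else 0 := by
      rw [mul_comm, hc_mul hYhomog f₁ d]
      by_cases hd : 1 ≤ d
      · rw [if_pos hd, if_pos hd, mul_comm, hf₁'def]
      · rw [if_neg hd, if_neg hd]
    rw [h7] at h6
    exact h6
  have hS : (∑ k : Fin m, homogeneousComponent d (π (b k) * Cp (n+1) k))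
      ∈ sp (Cp (n+1)) m := by
    refine Ideal.sum_mem _ fun k _ => ?_
    rw [hc_mul (Cp_homog (n+1) k.val) (π (b k)) d]
    by_cases h : 1 + 2 ^ (k : ℕ) ≤ d
    · rw [if_pos h]
      exact Ideal.mul_mem_left _ _ (c_mem_sp (Cp (n+1)) k.isLt)
    · rw [if_neg h]; exact zero_mem _
  by_cases hd : 1 ≤ d
  · rw [if_pos hd] at hdecomp
    have hYf : YY n * (f₁' * Cp (n+1) m) ∈ sp (Cp (n+1)) m := by
      have heq : YY n * (f₁' * Cp (n+1) m)
          = f * Cp (n+1) m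
            - (∑ k : Fin m, homogeneousComponent d (π (b k) * Cp (n+1) k)) * Cp (n+1) m := by
        conv_lhs => rw [show YY n * (f₁' * Cp (n+1) m) = (YY n * f₁') * Cp (n+1) m by ring]
        rw [show (YY n * f₁')
          = f - ∑ k : Fin m, homogeneousComponent d (π (b k) * Cp (n+1) k) by
            rw [hdecomp]; ring]
        ring
      rw [heq]
      exact sub_mem hmem (Ideal.mul_mem_right _ _ hS)
    have h8 : f₁' * Cp (n+1) m ∈ sp (Cp (n+1)) m := by
      refine peel_Y n m hm.le ih (fun _ => 0) _ ?_
      rwa [uu_zero]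
    have h9 : f₁' ∈ sp (Cp (n+1)) m :=
      ihd (d - 1) (by omega) f₁' (homogeneousComponent_isHomogeneous _ _) h8
    rw [hdecomp]
    exact add_mem hS (Ideal.mul_mem_left _ _ h9)
  · rw [if_neg hd, add_zero] at hdecomp
    rw [hdecomp]
    exact hS

lemma lower_step (n m : ℕ) (hm : m < n) (ih : ∀ k < n, Colon (Cp n) k) :
    Colon (Cp (n+1)) m := by
  intro f hf
  have hcomp : ∀ d : ℕ, homogeneousComponent d f ∈ sp (Cp (n+1)) m := by
    intro d
    refine lower_homog n m hm ih d _ (homogeneousComponent_isHomogeneous d f) ?_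
    have h1 : homogeneousComponent d f * Cp (n+1) m
        = homogeneousComponent (d + (1 + 2 ^ m)) (f * Cp (n+1) m) := by
      rw [hc_mul (Cp_homog (n+1) m) f (d + (1 + 2 ^ m)), if_pos (Nat.le_add_left _ _)]
      rw [Nat.add_sub_cancel]
    rw [h1]
    exact hc_mem_sp (n+1) m _ _ hf
  have hsum : f = ∑ d ∈ Finset.range (f.totalDegree + 1), homogeneousComponent d f :=
    (sum_homogeneousComponent f).symm
  rw [hsum]
  exact Ideal.sum_mem _ fun d _ => hcomp d

theorem main_all : ∀ n, ∀ m < n, Colon (Cp n) m := by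
  intro n
  induction n with
  | zero => intro m hm; exact absurd hm (by omega)
  | succ n ih =>
    intro m hm
    rcases Nat.lt_succ_iff_lt_or_eq.mp hm with h | h
    · exact lower_step n m h ih
    · subst h
      exact top_step m ih

/-! ### Transfer to the `Fin`-indexed polynomial ring -/

section FinTransfer

variable (n : ℕ)

abbrev Rfin (n : ℕ) : Type := MvPolynomial (Fin n ⊕ Fin n) (ZMod 2)

/-- the standard sequence in the `Fin`-indexed ring (defined for all `k : ℕ`). -/
def Cf (k : ℕ) : Rfin n := ∑ i : Fin n, X (Sum.inl i) * X (Sum.inr i) ^ (2 ^ k)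

def ιf : Rfin n →ₐ[ZMod 2] Rinf := rename (Sum.map Fin.val Fin.val)

def ρf : Rinf →ₐ[ZMod 2] Rfin n :=
  aeval (fun s => match s with
    | Sum.inl i => if h : i < n then X (Sum.inl (⟨i, h⟩ : Fin n)) else 0
    | Sum.inr j => if h : j < n then X (Sum.inr (⟨j, h⟩ : Fin n)) else 0)

lemma ρι (x : Rfin n) : ρf n (ιf n x) = x := by
  have : (ρf n).comp (ιf n) = AlgHom.id (ZMod 2) (Rfin n) := by
    apply MvPolynomial.algHom_ext
    intro s
    rcases s with i | j
    · show ρf n (ιf n (X (Sum.inl i))) = X (Sum.inl i)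
      rw [ιf, rename_X]
      show ρf n (X (Sum.inl i.val)) = X (Sum.inl i)
      rw [ρf, aeval_X]
      simp only [i.isLt, dif_pos, Fin.eta]
    · show ρf n (ιf n (X (Sum.inr j))) = X (Sum.inr j)
      rw [ιf, rename_X]
      show ρf n (X (Sum.inr j.val)) = X (Sum.inr j)
      rw [ρf, aeval_X]
      simp only [j.isLt, dif_pos, Fin.eta]
  exact congrFun (congrArg DFunLike.coe this) x

lemma ι_Cf (k : ℕ) : ιf n (Cf n k) = Cp n k := by
  rw [Cf, map_sum, Cp, ← Fin.sum_univ_eq_sum_range (fun i => XX i * YY i ^ (2 ^ k)) n]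
  refine Finset.sum_congr rfl fun i _ => ?_
  rw [map_mul, map_pow, ιf, rename_X, rename_X]
  rfl

lemma ρ_Cp (k : ℕ) : ρf n (Cp n k) = Cf n k := by
  rw [← ι_Cf, ρι]

lemma colon_retract {A B : Type*} [CommRing A] [CommRing B] (ι : A →+* B) (ρ : B →+* A)
    (hρι : ∀ x, ρ (ι x) = x) (c : ℕ → A) (C : ℕ → B) (hc : ∀ k, ι (c k) = C k)
    (hcρ : ∀ k, ρ (C k) = c k) (m : ℕ) (h : Colon C m) : Colon c m := by
  intro f hf
  have h1 : ι f * C m ∈ sp C m := by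
    have h0 := sp_map ι c C m (fun k _ => hc k) hf
    rwa [map_mul, hc m] at h0
  have h2 := h _ h1
  have h3 := sp_map ρ C c m (fun k _ => hcρ k) h2
  rwa [hρι f] at h3

lemma colon_Cf : ∀ m < n, Colon (Cf n) m := by
  intro m hm
  refine colon_retract (ιf n).toRingHom (ρf n).toRingHom (ρι n) (Cf n) (Cp n)
    (fun k => ι_Cf n k) (fun k => ρ_Cp n k) m (main_all n m hm)

end FinTransfer

section Matrix

variable (n : ℕ)

instance : CharP (Rfin n) 2 := inferInstance

lemma fin_alg_C {A : Type*} [CommRing A] [Algebra (ZMod 2) A]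
    (φ : Rfin n →ₐ[ZMod 2] A) (a : ZMod 2) : φ (C a) = algebraMap (ZMod 2) A a := by
  rw [← MvPolynomial.algebraMap_eq]; exact φ.commutes a

lemma fin_alg_C' (φ : Rfin n →ₐ[ZMod 2] Rfin n) (a : ZMod 2) : φ (C a) = C a := by
  rw [fin_alg_C, MvPolynomial.algebraMap_eq]

/-- the substitution `y_j ↦ ∑ₖ M_{jk} y_k`. -/
def ψm (M : Matrix (Fin n) (Fin n) (ZMod 2)) : Rfin n →ₐ[ZMod 2] Rfin n :=
  aeval (fun s => match s with
    | Sum.inl i => X (Sum.inl i)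
    | Sum.inr j => ∑ k : Fin n, C (M j k) * X (Sum.inr k))

lemma ψm_Xl (M : Matrix (Fin n) (Fin n) (ZMod 2)) (i : Fin n) :
    ψm n M (X (Sum.inl i)) = X (Sum.inl i) := by
  rw [ψm, aeval_X]

lemma ψm_Xr (M : Matrix (Fin n) (Fin n) (ZMod 2)) (j : Fin n) :
    ψm n M (X (Sum.inr j)) = ∑ k : Fin n, C (M j k) * X (Sum.inr k) := by
  rw [ψm, aeval_X]

lemma ψm_one (x : Rfin n) : ψm n 1 x = x := by
  have : ψm n 1 = AlgHom.id (ZMod 2) (Rfin n) := by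
    apply MvPolynomial.algHom_ext
    intro s
    rcases s with i | j
    · rw [ψm_Xl]; rfl
    · rw [ψm_Xr]
      show _ = X (Sum.inr j)
      rw [Finset.sum_eq_single j
        (fun k _ hk => by rw [Matrix.one_apply_ne (Ne.symm hk), map_zero, zero_mul])
        (fun hj => absurd (Finset.mem_univ j) hj)]
      rw [Matrix.one_apply_eq, map_one, one_mul]
  rw [this]; rfl

lemma ψm_comp (M N : Matrix (Fin n) (Fin n) (ZMod 2)) (x : Rfin n) :
    ψm n M (ψm n N x) = ψm n (N * M) x := by
  have : (ψm n M).comp (ψm n N) = ψm n (N * M) := by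
    apply MvPolynomial.algHom_ext
    intro s
    rcases s with i | j
    · show ψm n M (ψm n N (X (Sum.inl i))) = _
      rw [ψm_Xl, ψm_Xl, ψm_Xl]
    · show ψm n M (ψm n N (X (Sum.inr j))) = _
      rw [ψm_Xr, map_sum, ψm_Xr]
      have hterm : ∀ k : Fin n, ψm n M (C (N j k) * X (Sum.inr k))
          = ∑ t : Fin n, C (N j k * M k t) * X (Sum.inr t) := by
        intro k
        rw [map_mul, fin_alg_C', ψm_Xr, Finset.mul_sum]
        refine Finset.sum_congr rfl fun t _ => ?_
        rw [map_mul]; ring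
      rw [Finset.sum_congr rfl fun k _ => hterm k, Finset.sum_comm]
      refine Finset.sum_congr rfl fun t _ => ?_
      rw [Matrix.mul_apply, map_sum, Finset.sum_mul]
  exact congrFun (congrArg DFunLike.coe this) x

variable (b : Matrix (Fin n) (Fin n) (ZMod 2))

/-- the bilinear forms from the theorem statement, as an `ℕ`-indexed family. -/
def Bf (l : ℕ) : Rfin n :=
  ∑ i : Fin n, ∑ j : Fin n, C (b i j) * X (Sum.inl i) * X (Sum.inr j) ^ (2 ^ l)

lemma ψ_Cf (l : ℕ) : ψm n b (Cf n l) = Bf n b l := by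
  rw [Cf, map_sum, Bf]
  refine Finset.sum_congr rfl fun i _ => ?_
  rw [map_mul, map_pow, ψm_Xl, ψm_Xr]
  have hpow : (∑ k : Fin n, C (b i k) * X (Sum.inr k) : Rfin n) ^ (2 ^ l)
      = ∑ k : Fin n, C (b i k) * X (Sum.inr k) ^ (2 ^ l) := by
    rw [sum_pow_char_pow (p := 2) (n := l)]
    refine Finset.sum_congr rfl fun k _ => ?_
    rw [mul_pow, ← map_pow, zmod2_pow_pow]
  rw [hpow, Finset.mul_sum]
  refine Finset.sum_congr rfl fun j _ => ?_
  ring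

lemma colon_transfer {A : Type*} [CommRing A] (ψ ψ' : A →+* A)
    (hinv : ∀ x, ψ' (ψ x) = x) (hinv2 : ∀ x, ψ (ψ' x) = x)
    (c c' : ℕ → A) (hc : ∀ k, ψ (c k) = c' k) (m : ℕ) (h : Colon c m) : Colon c' m := by
  intro f hf
  have h1 : ψ' f * c m ∈ sp c m := by
    have h0 := sp_map ψ' c' c m (fun k _ => by rw [← hc k, hinv]) hf
    rwa [map_mul, (by rw [← hc m, hinv] : ψ' (c' m) = c m)] at h0
  have h2 := h _ h1
  have h3 := sp_map ψ c c' m (fun k _ => hc k) h2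
  rwa [hinv2 f] at h3

lemma colon_Bf (hrad : ∀ v : Fin n → ZMod 2, b.mulVec v = 0 → v = 0) :
    ∀ m < n, Colon (Bf n b) m := by
  have hdet : IsUnit b.det := by
    rw [isUnit_iff_ne_zero]
    intro h0
    obtain ⟨v, hv, hbv⟩ := (Matrix.exists_mulVec_eq_zero_iff).mpr h0
    exact hv (hrad v hbv)
  have h1 : b * b⁻¹ = 1 := Matrix.mul_nonsing_inv b hdet
  have h2 : b⁻¹ * b = 1 := Matrix.nonsing_inv_mul b hdet
  intro m hm
  refine colon_transfer (ψm n b).toRingHom (ψm n b⁻¹).toRingHom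
    (fun x => by show ψm n b⁻¹ (ψm n b x) = x; rw [ψm_comp, h1, ψm_one])
    (fun x => by show ψm n b (ψm n b⁻¹ x) = x; rw [ψm_comp, h2, ψm_one])
    (Cf n) (Bf n b) (fun k => ψ_Cf n b k) m (colon_Cf n m hm)

lemma constantCoeff_Bf (l : ℕ) : constantCoeff (Bf n b l) = 0 := by
  rw [Bf, map_sum]
  refine Finset.sum_eq_zero fun i _ => ?_
  rw [map_sum]
  refine Finset.sum_eq_zero fun j _ => ?_
  rw [map_mul, map_mul, constantCoeff_X, mul_zero, zero_mul]

end Matrix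

end
end Stmt15

open Stmt15 in
/-- If a bilinear form `B(x,y) = Σ b_{ij}xᵢyⱼ` over `𝔽₂` has zero right radical (the matrix
has trivial kernel acting on `y`), then `B(x,y), B(x,y²), …, B(x,y^{2^{n-1}})` is a regular
sequence of length `n` in `𝔽₂[x₁,…,xₙ,y₁,…,yₙ]`. -/
theorem stmt15 (n : ℕ) (b : Matrix (Fin n) (Fin n) (ZMod 2))
    (hrad : ∀ v : Fin n → ZMod 2, b.mulVec v = 0 → v = 0) :
    RingTheory.Sequence.IsRegular (MvPolynomial (Fin n ⊕ Fin n) (ZMod 2))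
      (List.ofFn fun l : Fin n =>
        ∑ i : Fin n, ∑ j : Fin n,
          C (b i j) * X (Sum.inl i) * X (Sum.inr j) ^ (2 ^ l.val)) := by
  classical
  have hrs_eq : (List.ofFn fun l : Fin n =>
      ∑ i : Fin n, ∑ j : Fin n,
        C (b i j) * X (Sum.inl i) * X (Sum.inr j) ^ (2 ^ l.val))
      = List.ofFn (fun l : Fin n => Bf n b l.val) := rfl
  rw [hrs_eq]
  have hcolon := colon_Bf n b hrad
  have hlen : (List.ofFn (fun l : Fin n => Bf n b l.val)).length = n := List.length_ofFn
  have htake : ∀ i : ℕ, i ≤ n →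
      Ideal.ofList ((List.ofFn (fun l : Fin n => Bf n b l.val)).take i) = sp (Bf n b) i := by
    intro i hi
    have hlist : (List.ofFn (fun l : Fin n => Bf n b l.val)).take i
        = List.ofFn (fun t : Fin i => Bf n b t.val) := by
      apply List.ext_getElem
      · rw [List.length_take, hlen, List.length_ofFn]; omega
      · intro j hj hj2
        simp only [List.getElem_take, List.getElem_ofFn]
    rw [hlist]
    show Ideal.span _ = Ideal.span _
    congr 1
    ext r
    simp only [Set.mem_setOf_eq, List.mem_ofFn, Set.mem_range]
  have hsmul_top : ∀ (I : Ideal (MvPolynomial (Fin n ⊕ Fin n) (ZMod 2))),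
      (I • (⊤ : Submodule (MvPolynomial (Fin n ⊕ Fin n) (ZMod 2))
        (MvPolynomial (Fin n ⊕ Fin n) (ZMod 2)))) = I := by
    intro I
    rw [Ideal.smul_eq_mul, Ideal.mul_top]
  refine ⟨⟨?_⟩, ?_⟩
  · intro i hi
    have hi' : i < n := by rwa [hlen] at hi
    have hgood : (List.ofFn (fun l : Fin n => Bf n b l.val))[i] = Bf n b i := by
      simp only [List.getElem_ofFn]
    rw [hgood, htake i hi'.le, hsmul_top]
    rintro x y hxy
    obtain ⟨a, rfl⟩ := Submodule.Quotient.mk_surjective _ x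
    obtain ⟨c, rfl⟩ := Submodule.Quotient.mk_surjective _ y
    have hxy' : (Submodule.Quotient.mk (Bf n b i • a) :
        _ ⧸ (sp (Bf n b) i : Submodule (MvPolynomial (Fin n ⊕ Fin n) (ZMod 2))
          (MvPolynomial (Fin n ⊕ Fin n) (ZMod 2))))
        = Submodule.Quotient.mk (Bf n b i • c) := by
      rw [Submodule.Quotient.mk_smul, Submodule.Quotient.mk_smul]
      exact hxy
    have h1 : Bf n b i • a - Bf n b i • c ∈ sp (Bf n b) i :=
      (Submodule.Quotient.eq _).mp hxy'
    have h2 : (a - c) * Bf n b i ∈ sp (Bf n b) i := by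
      have heq : (a - c) * Bf n b i = Bf n b i • a - Bf n b i • c := by
        simp only [smul_eq_mul]; ring
      rwa [heq]
    have h3 := hcolon i hi' (a - c) h2
    exact (Submodule.Quotient.eq _).mpr h3
  · intro hcontra
    have htop : Ideal.ofList (List.ofFn (fun l : Fin n => Bf n b l.val)) = sp (Bf n b) n := by
      have hh : (List.ofFn (fun l : Fin n => Bf n b l.val)).take n
          = List.ofFn (fun l : Fin n => Bf n b l.val) := by
        exact List.take_of_length_le (le_of_eq hlen)
      rw [← hh]; exact htake n le_rfl
    have hmem : (1 : MvPolynomial (Fin n ⊕ Fin n) (ZMod 2)) ∈ sp (Bf n b) n := by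
      rw [← htop, ← hsmul_top (Ideal.ofList (List.ofFn (fun l : Fin n => Bf n b l.val))),
        ← hcontra]
      exact Submodule.mem_top
    have hle : sp (Bf n b) n ≤ RingHom.ker (constantCoeff (R := ZMod 2)) := by
      refine Ideal.span_le.mpr ?_
      rintro r ⟨t, rfl⟩
      exact constantCoeff_Bf n b t.val
    have hker := hle hmem
    rw [RingHom.mem_ker, map_one] at hker
    exact one_ne_zero hker
end

section
/- In 𝔽₂[x₁,…,xₘ,y₁,…,yₘ], the sequence x₁y₁ + x₂y₂ + ⋯ + xₘyₘ, x₁y₁² + ⋯ + xₘyₘ², x₁y₁⁴ + ⋯ + xₘyₘ⁴, …, x₁y₁^{2^{m-1}} + ⋯ + xₘyₘ^{2^{m-1}} is a regular sequence of length m. -/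
open MvPolynomial
set_option linter.unusedSectionVars false

namespace Stmt16

variable {σ : Type*} [DecidableEq σ] (w : σ → ℕ)

local notation "Poly" => MvPolynomial σ (ZMod 2)

/-- Char-2 helper. -/
lemma pp (p : Poly) : p + p = 0 := by
  have h := add_smul (1 : ZMod 2) 1 p
  rw [show (1 + 1 : ZMod 2) = 0 by decide, zero_smul, one_smul] at h
  exact h.symm

lemma eq_of_add_eq_zero {p q : Poly} (h : p + q = 0) : p = q := by
  have : p + (p + q) = p + 0 := by rw [h]
  rwa [← add_assoc, pp, zero_add, add_zero, eq_comm] at this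

/-- Weighted degree (sup of weights of the support). -/
noncomputable def degW (p : Poly) : ℕ := p.support.sup (Finsupp.weight w)

lemma weight_le_degW {p : Poly} {μ} (h : μ ∈ p.support) :
    Finsupp.weight w μ ≤ degW w p := Finset.le_sup h

lemma degW_le {p : Poly} {n : ℕ} (h : ∀ μ ∈ p.support, Finsupp.weight w μ ≤ n) :
    degW w p ≤ n := Finset.sup_le h

lemma mem_supp_mul {p q : Poly} {μ} (h : μ ∈ (p * q).support) :
    ∃ ν ∈ p.support, ∃ ρ ∈ q.support, ν + ρ = μ := by
  have := support_mul p q h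
  rwa [Finset.mem_add] at this

lemma comp_eq_zero {p : Poly} {n : ℕ}
    (h : ∀ μ ∈ p.support, Finsupp.weight w μ ≠ n) :
    weightedHomogeneousComponent w n p = 0 := by
  ext μ
  rw [coeff_weightedHomogeneousComponent, coeff_zero]
  split_ifs with hw
  · by_contra hc
    exact h μ (mem_support_iff.mpr hc) hw
  · rfl

lemma mem_supp_comp {p : Poly} {n : ℕ} {μ}
    (h : μ ∈ (weightedHomogeneousComponent w n p).support) :
    μ ∈ p.support ∧ Finsupp.weight w μ = n := by
  have hc := mem_support_iff.mp h
  rw [coeff_weightedHomogeneousComponent] at hc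
  split_ifs at hc with hw
  · exact ⟨mem_support_iff.mpr hc, hw⟩
  · exact absurd rfl hc

lemma comp_mul_monomial (p : Poly) {n : ℕ} {A : σ →₀ ℕ}
    (h : Finsupp.weight w A ≤ n) :
    weightedHomogeneousComponent w n (p * monomial A 1) =
      weightedHomogeneousComponent w (n - Finsupp.weight w A) p * monomial A 1 := by
  ext μ
  rw [coeff_weightedHomogeneousComponent, coeff_mul_monomial', coeff_mul_monomial']
  by_cases hA : A ≤ μ
  · have key : Finsupp.weight w (μ - A) + Finsupp.weight w A = Finsupp.weight w μ := by
      rw [← map_add, tsub_add_cancel_of_le hA]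
    rw [if_pos hA, if_pos hA, coeff_weightedHomogeneousComponent]
    by_cases h1 : Finsupp.weight w μ = n
    · rw [if_pos h1, if_pos (by omega)]
    · rw [if_neg h1, if_neg (by omega), zero_mul]
  · rw [if_neg hA, if_neg hA, ite_self]

lemma top_ne_zero {p : Poly} (hp : p ≠ 0) :
    weightedHomogeneousComponent w (degW w p) p ≠ 0 := by
  obtain ⟨μ, hμ, he⟩ := Finset.exists_mem_eq_sup p.support
    (support_nonempty.mpr hp) (Finsupp.weight w)
  intro hc
  have h2 : Finsupp.weight w μ = degW w p := he.symm
  have := congrArg (coeff μ) hc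
  rw [coeff_weightedHomogeneousComponent, if_pos h2, coeff_zero] at this
  exact mem_support_iff.mp hμ this

lemma supp_add_top {p : Poly} {μ}
    (h : μ ∈ (p + weightedHomogeneousComponent w (degW w p) p).support) :
    μ ∈ p.support ∧ Finsupp.weight w μ ≠ degW w p := by
  have hc := mem_support_iff.mp h
  rw [coeff_add, coeff_weightedHomogeneousComponent] at hc
  split_ifs at hc with hw
  · exfalso
    apply hc
    have : ∀ a : ZMod 2, a + a = 0 := by decide
    exact this _
  · rw [add_zero] at hc
    exact ⟨mem_support_iff.mpr hc, hw⟩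

section Monomial

variable {nn : ℕ} (A : Fin nn → (σ →₀ ℕ))

/-- The monomial with exponent `A i`. -/
noncomputable def tmon (i : Fin nn) : Poly := monomial (A i) 1

lemma supp_mul_tmon {s : Poly} {i : Fin nn} {μ}
    (h : μ ∈ (s * tmon A i).support) : ∃ ν ∈ s.support, ν + A i = μ := by
  obtain ⟨ν, hν, ρ, hρ, he⟩ := mem_supp_mul h
  have : ρ = A i := by
    have := support_monomial_subset hρ
    simpa using this
  exact ⟨ν, hν, by rw [← this]; exact he⟩

lemma mem_supp_mul_tmon {s : Poly} {i : Fin nn} {ν}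
    (h : ν ∈ s.support) : ν + A i ∈ (s * tmon A i).support := by
  rw [mem_support_iff, tmon, coeff_mul_monomial, mul_one]
  exact mem_support_iff.mp h

lemma sum_tmon_supp {P : Fin nn → Prop} {t : Finset (Fin nn)} {s : Fin nn → Poly}
    (hmask : ∀ i ∈ t, ¬ P i → s i = 0) {μ}
    (h : μ ∈ (∑ i ∈ t, s i * tmon A i).support) : ∃ i, P i ∧ A i ≤ μ := by
  obtain ⟨i, hit, hmem⟩ : ∃ i ∈ t, μ ∈ (s i * tmon A i).support := by
    have := support_sum h
    simpa [Finset.mem_biUnion] using this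
  by_cases hPi : P i
  · obtain ⟨ν, _, he⟩ := supp_mul_tmon A hmem
    exact ⟨i, hPi, he ▸ le_add_self⟩
  · rw [hmask i hit hPi, zero_mul] at hmem
    simp at hmem

/-- Division by a family of monomials: if every monomial of `p` is divisible by
some allowed `A i`, then `p` is a combination with degree control. -/
lemma exists_division {P : Fin nn → Prop} (p : Poly)
    (hp : ∀ μ ∈ p.support, ∃ i, P i ∧ A i ≤ μ) :
    ∃ q : Fin nn → Poly, p = ∑ i, q i * tmon A i ∧ (∀ i, ¬ P i → q i = 0) ∧
      (∀ i, ∀ ν ∈ (q i).support, ∃ μ ∈ p.support,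
        Finsupp.weight w ν + Finsupp.weight w (A i) ≤ Finsupp.weight w μ) := by
  suffices H : ∀ (n : ℕ) (p : Poly), p.support.card ≤ n →
      (∀ μ ∈ p.support, ∃ i, P i ∧ A i ≤ μ) →
      ∃ q : Fin nn → Poly, p = ∑ i, q i * tmon A i ∧ (∀ i, ¬ P i → q i = 0) ∧
      (∀ i, ∀ ν ∈ (q i).support, ∃ μ ∈ p.support,
        Finsupp.weight w ν + Finsupp.weight w (A i) ≤ Finsupp.weight w μ) from
    H _ p le_rfl hp
  intro n
  induction n with
  | zero =>
    intro p hcard _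
    have : p = 0 := by
      have : p.support = ∅ := Finset.card_eq_zero.mp (Nat.le_zero.mp hcard)
      by_contra hc
      exact absurd this (Finset.nonempty_iff_ne_empty.mp (support_nonempty.mpr hc))
    exact ⟨0, by simp [this], fun _ _ => rfl, by simp⟩
  | succ n ih =>
    intro p hcard hp
    by_cases hp0 : p = 0
    · exact ⟨0, by simp [hp0], fun _ _ => rfl, by simp⟩
    obtain ⟨μ, hμ⟩ := support_nonempty.mpr hp0
    obtain ⟨i₀, hPi₀, hle⟩ := hp μ hμ
    set c := coeff μ p with hc
    set p₁ := p - monomial μ c with hp₁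
    have hsupp₁ : p₁.support = p.support.erase μ := by
      ext ν
      rw [Finset.mem_erase, mem_support_iff, mem_support_iff, hp₁, coeff_sub, coeff_monomial]
      by_cases hν : ν = μ
      · subst hν; simp [hc]
      · simp [Ne.symm hν, hν]
    have hcard₁ : p₁.support.card ≤ n := by
      rw [hsupp₁, Finset.card_erase_of_mem hμ]
      omega
    obtain ⟨q₁, hsum₁, hmask₁, hbd₁⟩ := ih p₁ hcard₁ (fun ν hν => hp ν (by
      rw [hsupp₁] at hν; exact Finset.mem_of_mem_erase hν))
    refine ⟨fun i => q₁ i + if i = i₀ then monomial (μ - A i₀) c else 0, ?_, ?_, ?_⟩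
    · have hmon : monomial (μ - A i₀) c * tmon A i₀ = monomial μ c := by
        rw [tmon, monomial_mul, mul_one, tsub_add_cancel_of_le hle]
      have hite : ∑ i, (if i = i₀ then monomial (μ - A i₀) c else 0) * tmon A i
          = monomial μ c := by
        rw [Finset.sum_eq_single i₀]
        · rw [if_pos rfl, hmon]
        · intro b _ hb; rw [if_neg hb, zero_mul]
        · intro h; exact absurd (Finset.mem_univ i₀) h
      have hkey : p = (∑ i, q₁ i * tmon A i) +
          ∑ i, (if i = i₀ then monomial (μ - A i₀) c else 0) * tmon A i := by
        rw [hite, ← hsum₁, hp₁]; ring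
      rw [hkey, ← Finset.sum_add_distrib]
      exact Finset.sum_congr rfl fun i _ => (add_mul _ _ _).symm
    · intro i hPi
      show q₁ i + (if i = i₀ then monomial (μ - A i₀) c else 0) = 0
      rw [hmask₁ i hPi, if_neg (by rintro rfl; exact hPi hPi₀), add_zero]
    · intro i ν hν
      have hν' : ν ∈ (q₁ i + if i = i₀ then monomial (μ - A i₀) c else 0).support := hν
      rcases Finset.mem_union.mp (support_add hν') with hν1 | hν2
      · obtain ⟨μ', hμ', hb⟩ := hbd₁ i ν hν1
        exact ⟨μ', by rw [hsupp₁] at hμ'; exact Finset.mem_of_mem_erase hμ', hb⟩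
      · by_cases hi : i = i₀
        · subst hi
          rw [if_pos rfl] at hν2
          have : ν = μ - A i := by
            have := support_monomial_subset hν2
            simpa using this
          subst this
          refine ⟨μ, hμ, ?_⟩
          rw [← map_add, tsub_add_cancel_of_le hle]
        · rw [if_neg hi] at hν2
          simp at hν2

lemma colon {P : Fin nn → Prop} {i₀ : Fin nn}
    (hdis : ∀ i, P i → ∀ x, x ∈ (A i).support → x ∉ (A i₀).support)
    {s : Poly} (hs : ∀ μ ∈ (s * tmon A i₀).support, ∃ i, P i ∧ A i ≤ μ) :
    ∀ ν ∈ s.support, ∃ i, P i ∧ A i ≤ ν := by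
  intro ν hν
  obtain ⟨i, hPi, hle⟩ := hs _ (mem_supp_mul_tmon A hν)
  refine ⟨i, hPi, ?_⟩
  intro x
  by_cases hx : A i x = 0
  · simp [hx]
  · have hx0 : A i₀ x = 0 :=
      Finsupp.notMem_support_iff.mp (hdis i hPi x (Finsupp.mem_support_iff.mpr hx))
    have := hle x
    rw [Finsupp.add_apply, hx0, add_zero] at this
    exact this

lemma sum_sum_eq_zero (a : Fin nn → Fin nn → Poly)
    (hsym : ∀ i j, a i j = a j i) (hdiag : ∀ i, a i i = 0) :
    ∑ i, ∑ j, a i j = 0 := by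
  rw [← Finset.sum_product']
  apply Finset.sum_ninvolution (fun p => (p.2, p.1))
  · intro x
    rw [hsym x.1 x.2]
    exact pp _
  · intro x hx
    intro hc
    apply hx
    have : x.1 = x.2 := (Prod.ext_iff.mp hc).2
    rw [this]
    exact hdiag _
  · intro x; simp
  · intro x; rfl

end Monomial

section Syz

variable {nn : ℕ} (A : Fin nn → (σ →₀ ℕ))

lemma syz (hdis : ∀ i j : Fin nn, i ≠ j → ∀ x, x ∈ (A i).support → x ∉ (A j).support) :
    ∀ (l : ℕ) (E : ℕ) (s : Fin nn → Poly),
      (∀ i : Fin nn, ¬ (i.val < l) → s i = 0) →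
      (∀ i : Fin nn, ∀ ν ∈ (s i).support,
        Finsupp.weight w ν + Finsupp.weight w (A i) ≤ E) →
      (∑ i, s i * tmon A i) = 0 →
      ∃ h : Fin nn → Fin nn → Poly,
        (∀ i j, h i j = h j i) ∧ (∀ i, h i i = 0) ∧
        (∀ i j : Fin nn, ¬ (i.val < l ∧ j.val < l) → h i j = 0) ∧
        (∀ i, s i = ∑ j, h i j * tmon A j) ∧
        (∀ i j, ∀ ν ∈ (h i j).support,
          Finsupp.weight w ν + Finsupp.weight w (A i) + Finsupp.weight w (A j) ≤ E) := by
  intro l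
  induction l with
  | zero =>
    intro E s hmask _ _
    refine ⟨0, fun _ _ => rfl, fun _ => rfl, fun _ _ _ => rfl, ?_, by simp⟩
    intro i
    rw [hmask i (by omega)]
    simp
  | succ l ih =>
    intro E s hmask hbd htot
    by_cases hl : l < nn
    case neg =>
      obtain ⟨h, h1, h2, h3, h4, h5⟩ := ih E s
        (fun i hi => absurd (lt_of_lt_of_le i.isLt (not_lt.mp hl)) hi) hbd htot
      exact ⟨h, h1, h2, fun i j hij => h3 i j
        (fun hc => hij ⟨Nat.lt_succ_of_lt hc.1, Nat.lt_succ_of_lt hc.2⟩), h4, h5⟩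
    case pos =>
    set iₗ : Fin nn := ⟨l, hl⟩ with hiₗ
    have hval : iₗ.val = l := rfl
    have hnot : ¬ (iₗ.val < l) := by rw [hval]; omega
    have hsplit : s iₗ * tmon A iₗ + ∑ i ∈ Finset.univ.erase iₗ, s i * tmon A i = 0 := by
      rw [Finset.add_sum_erase Finset.univ (fun i => s i * tmon A i) (Finset.mem_univ iₗ)]
      exact htot
    have hkey : s iₗ * tmon A iₗ = ∑ i ∈ Finset.univ.erase iₗ, s i * tmon A i :=
      eq_of_add_eq_zero hsplit
    have hmaskₗ : ∀ i ∈ Finset.univ.erase iₗ, ¬ (i.val < l) → s i = 0 := by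
      intro i hi hil
      apply hmask
      intro hc
      exact (Finset.mem_erase.mp hi).1 (Fin.ext (by omega))
    have hchar : ∀ ν ∈ (s iₗ).support, ∃ i : Fin nn, i.val < l ∧ A i ≤ ν := by
      apply colon A (P := fun i => i.val < l) (i₀ := iₗ)
      · intro i hi x hx
        refine hdis i iₗ ?_ x hx
        intro hc
        rw [hc, hval] at hi
        omega
      · intro μ hμ
        rw [hkey] at hμ
        exact sum_tmon_supp A hmaskₗ hμ
    obtain ⟨g, hgsum, hgmask, hgbd⟩ :=
      exists_division w A (P := fun i => i.val < l) (s iₗ) hchar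
    have hgbd' : ∀ i, ∀ ν ∈ (g i).support,
        Finsupp.weight w ν + Finsupp.weight w (A i) + Finsupp.weight w (A iₗ) ≤ E := by
      intro i ν hν
      obtain ⟨μ, hμ, hb⟩ := hgbd i ν hν
      have h2 := hbd iₗ μ hμ
      omega
    set s' : Fin nn → Poly := fun i => if i = iₗ then 0 else s i + g i * tmon A iₗ with hs'
    have hs'def : ∀ i, s' i = if i = iₗ then 0 else s i + g i * tmon A iₗ :=
      fun i => by rw [hs']
    have hs'mask : ∀ i : Fin nn, ¬ (i.val < l) → s' i = 0 := by
      intro i hi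
      rw [hs'def]
      by_cases hiiₗ : i = iₗ
      · simp [hiiₗ]
      · rw [if_neg hiiₗ, hmask i (fun hc => hiiₗ (Fin.ext (by omega))), hgmask i hi,
          zero_mul, add_zero]
    have hs'bd : ∀ i : Fin nn, ∀ ν ∈ (s' i).support,
        Finsupp.weight w ν + Finsupp.weight w (A i) ≤ E := by
      intro i ν hν
      rw [hs'def] at hν
      by_cases hiiₗ : i = iₗ
      · rw [if_pos hiiₗ] at hν; simp at hν
      · rw [if_neg hiiₗ] at hν
        rcases Finset.mem_union.mp (support_add hν) with h1 | h2
        · exact hbd i ν h1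
        · obtain ⟨ν', hν', he⟩ := supp_mul_tmon A h2
          have hb := hgbd' i ν' hν'
          have he2 : Finsupp.weight w ν = Finsupp.weight w ν' + Finsupp.weight w (A iₗ) := by
            rw [← he, map_add]
          omega
    have hgl : g iₗ * tmon A iₗ = 0 := by rw [hgmask iₗ hnot, zero_mul]
    have hs'tot : ∑ i, s' i * tmon A i = 0 := by
      have h1 : ∑ i, s' i * tmon A i
          = ∑ i ∈ Finset.univ.erase iₗ, (s i + g i * tmon A iₗ) * tmon A i := by
        rw [← Finset.add_sum_erase Finset.univ (fun i => s' i * tmon A i) (Finset.mem_univ iₗ),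
          hs'def, if_pos rfl, zero_mul, zero_add]
        exact Finset.sum_congr rfl fun i hi => by
          rw [hs'def, if_neg (Finset.mem_erase.mp hi).1]
      have h2 : ∑ i ∈ Finset.univ.erase iₗ, g i * tmon A i = s iₗ := by
        rw [Finset.sum_erase (f := fun i => g i * tmon A i) Finset.univ hgl, ← hgsum]
      rw [h1]
      have h3 : ∀ i : Fin nn, (s i + g i * tmon A iₗ) * tmon A i
          = s i * tmon A i + (g i * tmon A i) * tmon A iₗ := fun i => by ring
      rw [Finset.sum_congr rfl (fun i _ => h3 i), Finset.sum_add_distrib, ← Finset.sum_mul,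
        h2, ← hkey, pp]
    obtain ⟨h, hsym, hdiag, hmaskh, hrep, hbdh⟩ := ih E s' hs'mask hs'bd hs'tot
    refine ⟨fun i j => h i j + ((if j = iₗ then g i else 0) + (if i = iₗ then g j else 0)),
      ?_, ?_, ?_, ?_, ?_⟩
    · intro i j
      show h i j + ((if j = iₗ then g i else 0) + (if i = iₗ then g j else 0))
        = h j i + ((if i = iₗ then g j else 0) + (if j = iₗ then g i else 0))
      rw [hsym i j]
      ring
    · intro i
      show h i i + ((if i = iₗ then g i else 0) + (if i = iₗ then g i else 0)) = 0
      rw [hdiag]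
      by_cases hi : i = iₗ
      · rw [if_pos hi, hi, hgmask _ hnot]; simp
      · rw [if_neg hi]; simp
    · intro i j hij
      show h i j + ((if j = iₗ then g i else 0) + (if i = iₗ then g j else 0)) = 0
      rw [hmaskh i j (fun hc => hij ⟨Nat.lt_succ_of_lt hc.1, Nat.lt_succ_of_lt hc.2⟩), zero_add]
      have hgz : ∀ k : Fin nn, ¬ (k.val < l + 1) → g k = 0 :=
        fun k hk => hgmask k (fun hc => hk (Nat.lt_succ_of_lt hc))
      by_cases hj : j = iₗ
      · have hi' : ¬ (i.val < l + 1) := fun hc => hij ⟨hc, by rw [hj, hval]; omega⟩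
        have hi2 : i ≠ iₗ := fun hc => hi' (by rw [hc, hval]; omega)
        rw [if_pos hj, hgz i hi', if_neg hi2]
        simp
      · rw [if_neg hj]
        by_cases hi2 : i = iₗ
        · have hj' : ¬ (j.val < l + 1) := fun hc => hij ⟨by rw [hi2, hval]; omega, hc⟩
          rw [if_pos hi2, hgz j hj']; simp
        · rw [if_neg hi2]; simp
    · intro i
      show s i = ∑ j, (h i j + ((if j = iₗ then g i else 0) + (if i = iₗ then g j else 0)))
        * tmon A j
      have e1 : ∑ j, (h i j + ((if j = iₗ then g i else 0) + (if i = iₗ then g j else 0)))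
            * tmon A j
          = (∑ j, h i j * tmon A j) + ((∑ j, (if j = iₗ then g i else 0) * tmon A j)
            + ∑ j, (if i = iₗ then g j else 0) * tmon A j) := by
        rw [← Finset.sum_add_distrib, ← Finset.sum_add_distrib]
        exact Finset.sum_congr rfl fun j _ => by ring
      have e2 : ∑ j, (if j = iₗ then g i else 0) * tmon A j = g i * tmon A iₗ := by
        rw [Finset.sum_eq_single iₗ]
        · rw [if_pos rfl]
        · intro b _ hb; rw [if_neg hb, zero_mul]
        · intro hcon; exact absurd (Finset.mem_univ iₗ) hcon
      rw [e1, e2, ← hrep i]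
      by_cases hi : i = iₗ
      · have e3 : ∑ j, (if i = iₗ then g j else 0) * tmon A j = ∑ j, g j * tmon A j := by
          exact Finset.sum_congr rfl fun j _ => by rw [if_pos hi]
        rw [e3, hs'def, if_pos hi, hi, hgl, ← hgsum]
        simp
      · have e3 : ∑ j, (if i = iₗ then g j else 0) * tmon A j = 0 := by
          rw [Finset.sum_congr rfl fun j _ => by rw [if_neg hi, zero_mul]]
          exact Finset.sum_const_zero
        rw [e3, hs'def, if_neg hi]
        have h2x := pp (g i * tmon A iₗ)
        linear_combination -h2x
    · intro i j ν hν
      have hν' : ν ∈ (h i j + ((if j = iₗ then g i else 0)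
          + (if i = iₗ then g j else 0))).support := hν
      rcases Finset.mem_union.mp (support_add hν') with h1 | h2
      · exact hbdh i j ν h1
      rcases Finset.mem_union.mp (support_add h2) with h3 | h4
      · by_cases hj : j = iₗ
        · rw [if_pos hj] at h3
          have := hgbd' i ν h3
          rw [hj]
          omega
        · rw [if_neg hj] at h3; simp at h3
      · by_cases hi : i = iₗ
        · rw [if_pos hi] at h4
          have := hgbd' j ν h4
          rw [hi]
          omega
        · rw [if_neg hi] at h4; simp at h4

end Syz

section Improve

variable {nn : ℕ} (A : Fin nn → (σ →₀ ℕ)) (r : Fin nn → MvPolynomial σ (ZMod 2))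

lemma rep_improve
    (hdis : ∀ i j : Fin nn, i ≠ j → ∀ x, x ∈ (A i).support → x ∉ (A j).support)
    (hr : ∀ i, ∀ ρ ∈ (r i).support, Finsupp.weight w ρ < Finsupp.weight w (A i)) :
    ∀ (k E l : ℕ) (c : Fin nn → Poly), E ≤ k →
      (∀ i : Fin nn, ¬ (i.val < l) → c i = 0) →
      (∀ i : Fin nn, ∀ ν ∈ (c i).support,
        Finsupp.weight w ν + Finsupp.weight w (A i) ≤ E) →
      ∃ c' : Fin nn → Poly, (∀ i : Fin nn, ¬ (i.val < l) → c' i = 0) ∧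
        (∑ i : Fin nn, c' i * (tmon A i + r i) : Poly)
          = (∑ i : Fin nn, c i * (tmon A i + r i)) ∧
        (∀ i : Fin nn, ∀ ν ∈ (c' i).support,
          Finsupp.weight w ν + Finsupp.weight w (A i)
            ≤ degW w (∑ i : Fin nn, c i * (tmon A i + r i))) := by
  intro k
  induction k with
  | zero =>
    intro E l c hEk hmask hbd
    exact ⟨c, hmask, rfl, fun i ν hν => by have := hbd i ν hν; omega⟩
  | succ k ih =>
    intro E l c hEk hmask hbd
    set p := (∑ i : Fin nn, c i * (tmon A i + r i) : Poly) with hp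
    by_cases hE : E ≤ degW w p
    · exact ⟨c, hmask, rfl, fun i ν hν => le_trans (hbd i ν hν) hE⟩
    push_neg at hE
    set s : Fin nn → Poly :=
      fun i => weightedHomogeneousComponent w (E - Finsupp.weight w (A i)) (c i) with hs
    have hsdef : ∀ i, s i
        = weightedHomogeneousComponent w (E - Finsupp.weight w (A i)) (c i) :=
      fun i => by rw [hs]
    have hcompE : weightedHomogeneousComponent w E p = 0 :=
      comp_eq_zero w (fun μ hμ => by have := weight_le_degW w hμ; omega)
    have hcomp_term : ∀ i : Fin nn,
        weightedHomogeneousComponent w E (c i * (tmon A i + r i)) = s i * tmon A i := by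
      intro i
      by_cases hc0 : c i = 0
      · rw [hc0, zero_mul, map_zero, hsdef, hc0, map_zero, zero_mul]
      · have hdiE : Finsupp.weight w (A i) ≤ E := by
          obtain ⟨ν, hν⟩ := support_nonempty.mpr hc0
          have := hbd i ν hν
          omega
        rw [mul_add, map_add]
        have hz : weightedHomogeneousComponent w E (c i * r i) = 0 := by
          apply comp_eq_zero w
          intro μ hμ
          obtain ⟨ν, hν, ρ, hρ, he⟩ := mem_supp_mul hμ
          have h1 := hbd i ν hν
          have h2 := hr i ρ hρ
          rw [← he, map_add]
          omega
        rw [hz, add_zero, tmon, comp_mul_monomial w (c i) hdiE, hsdef]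
    have hstot : ∑ i, s i * tmon A i = 0 := by
      calc ∑ i, s i * tmon A i
          = ∑ i, weightedHomogeneousComponent w E (c i * (tmon A i + r i)) :=
            Finset.sum_congr rfl fun i _ => (hcomp_term i).symm
        _ = weightedHomogeneousComponent w E p := by rw [← map_sum, ← hp]
        _ = 0 := hcompE
    have hsmask : ∀ i : Fin nn, ¬ (i.val < l) → s i = 0 :=
      fun i hi => by rw [hsdef, hmask i hi, map_zero]
    have hsbd : ∀ i : Fin nn, ∀ ν ∈ (s i).support,
        Finsupp.weight w ν + Finsupp.weight w (A i) ≤ E := by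
      intro i ν hν
      rw [hsdef] at hν
      exact hbd i ν (mem_supp_comp w hν).1
    obtain ⟨h, hsym, hdiag, hmaskh, hrep, hbdh⟩ := syz w A hdis l E s hsmask hsbd hstot
    set c' : Fin nn → Poly := fun i => (c i + s i) + ∑ j, h j i * r j with hc'
    have hc'def : ∀ i, c' i = (c i + s i) + ∑ j, h j i * r j := fun i => by rw [hc']
    have hrepeq : ∑ i, c' i * (tmon A i + r i) = p := by
      have expand : ∀ i : Fin nn, c' i * (tmon A i + r i)
          = c i * (tmon A i + r i) + (s i * (tmon A i + r i)
            + (∑ j, h j i * r j) * (tmon A i + r i)) := by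
        intro i; rw [hc'def]; ring
      rw [Finset.sum_congr rfl (fun i _ => expand i), Finset.sum_add_distrib]
      have hA1 : ∀ i : Fin nn, s i * (tmon A i + r i)
          + (∑ j, h j i * r j) * (tmon A i + r i)
          = (s i * tmon A i) + ((s i * r i + ∑ j, (h j i * r j) * tmon A i)
            + ∑ j, (h j i * r j) * r i) := by
        intro i; rw [mul_add, mul_add, Finset.sum_mul, Finset.sum_mul]; ring
      have hzero : ∑ i, (s i * (tmon A i + r i)
          + (∑ j, h j i * r j) * (tmon A i + r i)) = 0 := by
        rw [Finset.sum_congr rfl (fun i _ => hA1 i), Finset.sum_add_distrib, hstot, zero_add,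
          Finset.sum_add_distrib]
        have hlast : ∑ i, ∑ j, (h j i * r j) * r i = 0 := by
          apply sum_sum_eq_zero (fun i j => (h j i * r j) * r i)
          · intro i j
            rw [hsym j i]
            ring
          · intro i
            rw [hdiag i, zero_mul, zero_mul]
        rw [hlast, add_zero]
        have hsr : ∀ i : Fin nn, s i * r i = ∑ j, (h i j * tmon A j) * r i := by
          intro i; rw [hrep i, Finset.sum_mul]
        rw [Finset.sum_congr rfl (fun i _ => by rw [hsr i]), Finset.sum_add_distrib]
        have hcomm : ∑ i, ∑ j, (h j i * r j) * tmon A i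
            = ∑ i, ∑ j, (h i j * r i) * tmon A j := Finset.sum_comm
        rw [hcomm, ← Finset.sum_add_distrib]
        apply Finset.sum_eq_zero
        intro i _
        rw [← Finset.sum_add_distrib]
        apply Finset.sum_eq_zero
        intro j _
        have hpx := pp ((h i j * tmon A j) * r i)
        linear_combination hpx
      rw [hzero, add_zero, ← hp]
    have hc'mask : ∀ i : Fin nn, ¬ (i.val < l) → c' i = 0 := by
      intro i hi
      rw [hc'def, hmask i hi, hsmask i hi]
      rw [Finset.sum_eq_zero (fun j _ => by
        rw [hmaskh j i (fun hc => hi hc.2), zero_mul])]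
      simp
    have hc'bd : ∀ i : Fin nn, ∀ ν ∈ (c' i).support,
        Finsupp.weight w ν + Finsupp.weight w (A i) ≤ E - 1 := by
      intro i ν hν
      rw [hc'def] at hν
      rcases Finset.mem_union.mp (support_add hν) with h1 | h2
      · have hco := mem_support_iff.mp h1
        rw [coeff_add, hsdef, coeff_weightedHomogeneousComponent] at hco
        by_cases hw : Finsupp.weight w ν = E - Finsupp.weight w (A i)
        · rw [if_pos hw] at hco
          exfalso
          apply hco
          have h22 : ∀ a : ZMod 2, a + a = 0 := by decide
          exact h22 _
        · rw [if_neg hw, add_zero] at hco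
          have := hbd i ν (mem_support_iff.mpr hco)
          omega
      · obtain ⟨j, _, hj⟩ : ∃ j ∈ Finset.univ, ν ∈ (h j i * r j).support := by
          simpa [Finset.mem_biUnion] using support_sum h2
        obtain ⟨ν1, hν1, ρ, hρ, he⟩ := mem_supp_mul hj
        have hb1 := hbdh j i ν1 hν1
        have hb2 := hr j ρ hρ
        rw [← he, map_add]
        omega
    obtain ⟨c'', hm'', he'', hb''⟩ := ih (E - 1) l c' (by omega) hc'mask hc'bd
    refine ⟨c'', hm'', by rw [he'', hrepeq], ?_⟩
    intro i ν hν
    have hfin := hb'' i ν hν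
    rwa [hrepeq] at hfin

end Improve

section Main

variable {nn : ℕ} (A : Fin nn → (σ →₀ ℕ)) (r : Fin nn → MvPolynomial σ (ZMod 2))

/-- The ideal generated by the first `l` of the deformed elements. -/
noncomputable def Jid (l : ℕ) : Ideal Poly :=
  Ideal.span {p : Poly | ∃ i : Fin nn, i.val < l ∧ p = tmon A i + r i}

lemma mem_J_of_rep {l : ℕ} (c : Fin nn → Poly)
    (hmask : ∀ i : Fin nn, ¬ (i.val < l) → c i = 0) :
    (∑ i : Fin nn, c i * (tmon A i + r i)) ∈ Jid A r l := by
  apply Ideal.sum_mem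
  intro i _
  by_cases hi : i.val < l
  · exact Ideal.mul_mem_left _ _ (Ideal.subset_span ⟨i, hi, rfl⟩)
  · rw [hmask i hi, zero_mul]; exact Ideal.zero_mem _

lemma rep_of_mem_J {l : ℕ} {a : Poly} (ha : a ∈ Jid A r l) :
    ∃ c : Fin nn → Poly, (∀ i : Fin nn, ¬ (i.val < l) → c i = 0) ∧
      a = ∑ i : Fin nn, c i * (tmon A i + r i) := by
  set g : Fin nn → Poly := fun i => if i.val < l then tmon A i + r i else 0 with hg
  have hgdef : ∀ i : Fin nn, g i = if i.val < l then tmon A i + r i else 0 :=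
    fun i => by rw [hg]
  have hg1 : Jid A r l ≤ Ideal.span (Set.range g) := by
    rw [Jid, Ideal.span_le]
    rintro q ⟨i, hi, rfl⟩
    apply Ideal.subset_span
    exact ⟨i, by rw [hgdef, if_pos hi]⟩
  have ha2 : a ∈ Submodule.span Poly (Set.range g) := hg1 ha
  obtain ⟨c, hc⟩ := (Submodule.mem_span_range_iff_exists_fun _).mp ha2
  refine ⟨fun i => if i.val < l then c i else 0, fun i hi => by simp [hi], ?_⟩
  rw [← hc]
  apply Finset.sum_congr rfl
  intro i _
  show c i • g i = (if (i : ℕ) < l then c i else 0) * (tmon A i + r i)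
  by_cases hi : i.val < l
  · rw [if_pos hi, hgdef, if_pos hi, smul_eq_mul]
  · rw [if_neg hi, hgdef, if_neg hi, smul_eq_mul, mul_zero, zero_mul]

lemma step
    (hdis : ∀ i j : Fin nn, i ≠ j → ∀ x, x ∈ (A i).support → x ∉ (A j).support)
    (hr : ∀ i, ∀ ρ ∈ (r i).support, Finsupp.weight w ρ < Finsupp.weight w (A i))
    (l : Fin nn) {a : Poly} (ha : a ≠ 0)
    (hmem : a * (tmon A l + r l) ∈ Jid A r l.val) :
    ∃ a' : Poly, (∀ μ ∈ a'.support, Finsupp.weight w μ < degW w a) ∧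
      a' * (tmon A l + r l) ∈ Jid A r l.val ∧ a + a' ∈ Jid A r l.val := by
  obtain ⟨c, hcmask, hcsum⟩ := rep_of_mem_J A r hmem
  set E := Finset.univ.sup (fun i : Fin nn => degW w (c i) + Finsupp.weight w (A i)) with hE
  have hcbd : ∀ i : Fin nn, ∀ ν ∈ (c i).support,
      Finsupp.weight w ν + Finsupp.weight w (A i) ≤ E := by
    intro i ν hν
    have h1 : degW w (c i) + Finsupp.weight w (A i) ≤ E := by
      rw [hE]
      exact Finset.le_sup (f := fun i : Fin nn => degW w (c i) + Finsupp.weight w (A i))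
        (Finset.mem_univ i)
    have h2 := weight_le_degW w hν
    omega
  obtain ⟨c', hc'mask, hc'sum, hc'bd⟩ :=
    rep_improve w A r hdis hr E E l.val c le_rfl hcmask hcbd
  rw [← hcsum] at hc'sum hc'bd
  set N := degW w a + Finsupp.weight w (A l) with hN
  have hfl_supp : ∀ ρ ∈ (tmon A l + r l).support,
      Finsupp.weight w ρ ≤ Finsupp.weight w (A l) := by
    intro ρ hρ
    rcases Finset.mem_union.mp (support_add hρ) with h1 | h2
    · rw [tmon] at h1
      have h3 := support_monomial_subset h1
      simp only [Finset.mem_singleton] at h3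
      rw [h3]
    · exact le_of_lt (hr l ρ h2)
  have hdegp : degW w (a * (tmon A l + r l)) ≤ N := by
    apply degW_le
    intro μ hμ
    obtain ⟨ν, hν, ρ, hρ, he⟩ := mem_supp_mul hμ
    have h1 := weight_le_degW w hν
    have h2 := hfl_supp ρ hρ
    rw [← he, map_add]
    omega
  have hcompL : weightedHomogeneousComponent w N (a * (tmon A l + r l))
      = weightedHomogeneousComponent w (degW w a) a * tmon A l := by
    rw [mul_add, map_add]
    have hz : weightedHomogeneousComponent w N (a * r l) = 0 := by
      apply comp_eq_zero w
      intro μ hμ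
      obtain ⟨ν, hν, ρ, hρ, he⟩ := mem_supp_mul hμ
      have h1 := weight_le_degW w hν
      have h2 := hr l ρ hρ
      rw [← he, map_add]
      omega
    rw [hz, add_zero, tmon,
      comp_mul_monomial w a (show Finsupp.weight w (A l) ≤ N by omega)]
    have hNd : N - Finsupp.weight w (A l) = degW w a := by omega
    rw [hNd]
  have hcompR : weightedHomogeneousComponent w N (∑ i : Fin nn, c' i * (tmon A i + r i))
      = ∑ i : Fin nn,
        weightedHomogeneousComponent w (N - Finsupp.weight w (A i)) (c' i) * tmon A i := by
    rw [map_sum]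
    apply Finset.sum_congr rfl
    intro i _
    by_cases hc0 : c' i = 0
    · rw [hc0, zero_mul, map_zero, map_zero, zero_mul]
    · have hdiN : Finsupp.weight w (A i) ≤ N := by
        obtain ⟨ν, hν⟩ := support_nonempty.mpr hc0
        have h1 := hc'bd i ν hν
        omega
      rw [mul_add, map_add]
      have hz : weightedHomogeneousComponent w N (c' i * r i) = 0 := by
        apply comp_eq_zero w
        intro μ hμ
        obtain ⟨ν, hν, ρ, hρ, he⟩ := mem_supp_mul hμ
        have h1 := hc'bd i ν hν
        have h2 := hr i ρ hρ
        rw [← he, map_add]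
        omega
      rw [hz, add_zero, tmon, comp_mul_monomial w (c' i) hdiN]
  set inA := weightedHomogeneousComponent w (degW w a) a with hinA
  have hkey : inA * tmon A l = ∑ i : Fin nn,
      weightedHomogeneousComponent w (N - Finsupp.weight w (A i)) (c' i) * tmon A i := by
    calc inA * tmon A l
        = weightedHomogeneousComponent w N (a * (tmon A l + r l)) := hcompL.symm
      _ = weightedHomogeneousComponent w N (∑ i : Fin nn, c' i * (tmon A i + r i)) := by
          rw [hc'sum]
      _ = _ := hcompR
  have hchar : ∀ ν ∈ inA.support, ∃ i : Fin nn, i.val < l.val ∧ A i ≤ ν := by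
    apply colon A (P := fun i : Fin nn => i.val < l.val) (i₀ := l)
    · intro i hi x hx
      exact hdis i l (fun hc => by rw [hc] at hi; omega) x hx
    · intro μ hμ
      rw [hkey] at hμ
      exact sum_tmon_supp A (P := fun i : Fin nn => i.val < l.val)
        (fun i _ hi => by rw [hc'mask i hi, map_zero]) hμ
  obtain ⟨e, hesum, hemask, hebd⟩ :=
    exists_division w A (P := fun i : Fin nn => i.val < l.val) inA hchar
  have hebd' : ∀ i : Fin nn, ∀ ν ∈ (e i).support,
      Finsupp.weight w ν + Finsupp.weight w (A i) ≤ degW w a := by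
    intro i ν hν
    obtain ⟨μ, hμ, hb⟩ := hebd i ν hν
    rw [hinA] at hμ
    have h2 := weight_le_degW w (mem_supp_comp w hμ).1
    omega
  set a' : Poly := (a + inA) + ∑ i : Fin nn, e i * r i with ha'
  have ha'supp : ∀ μ ∈ a'.support, Finsupp.weight w μ < degW w a := by
    intro μ hμ
    rw [ha'] at hμ
    rcases Finset.mem_union.mp (support_add hμ) with h1 | h2
    · rw [hinA] at h1
      have h3 := supp_add_top w h1
      have h4 := weight_le_degW w h3.1
      have h5 := h3.2
      omega
    · obtain ⟨i, _, hi⟩ : ∃ i ∈ Finset.univ, μ ∈ (e i * r i).support := by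
        simpa [Finset.mem_biUnion] using support_sum h2
      obtain ⟨ν, hν, ρ, hρ, he⟩ := mem_supp_mul hi
      have h1 := hebd' i ν hν
      have h2 := hr i ρ hρ
      rw [← he, map_add]
      omega
  have hsumJ : a + a' ∈ Jid A r l.val := by
    have hchain : a + a' = ∑ i : Fin nn, e i * (tmon A i + r i) := by
      rw [ha']
      have h1 : a + ((a + inA) + ∑ i : Fin nn, e i * r i)
          = inA + ∑ i : Fin nn, e i * r i := by
        have hpa := pp a
        linear_combination hpa
      rw [h1, hesum, ← Finset.sum_add_distrib]
      exact Finset.sum_congr rfl fun i _ => by ring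
    rw [hchain]
    exact mem_J_of_rep A r e hemask
  refine ⟨a', ha'supp, ?_, hsumJ⟩
  have hsplit : a' = a + (a + a') := by
    have hpa := pp a
    linear_combination -hpa
  rw [hsplit, add_mul]
  exact Ideal.add_mem _ hmem (Ideal.mul_mem_right _ _ hsumJ)

lemma reg
    (hdis : ∀ i j : Fin nn, i ≠ j → ∀ x, x ∈ (A i).support → x ∉ (A j).support)
    (hr : ∀ i, ∀ ρ ∈ (r i).support, Finsupp.weight w ρ < Finsupp.weight w (A i))
    (l : Fin nn) :
    ∀ (N : ℕ) (a : Poly), degW w a ≤ N →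
      a * (tmon A l + r l) ∈ Jid A r l.val → a ∈ Jid A r l.val := by
  intro N
  induction N with
  | zero =>
    intro a hN hmem
    by_cases h0 : a = 0
    · rw [h0]; exact Ideal.zero_mem _
    obtain ⟨a', hs, hm, hsum⟩ := step w A r hdis hr l h0 hmem
    have ha'0 : a' = 0 := by
      by_contra hc
      obtain ⟨μ, hμ⟩ := support_nonempty.mpr hc
      have := hs μ hμ
      omega
    rw [ha'0, add_zero] at hsum
    exact hsum
  | succ N ih =>
    intro a hN hmem
    by_cases h0 : a = 0
    · rw [h0]; exact Ideal.zero_mem _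
    obtain ⟨a', hs, hm, hsum⟩ := step w A r hdis hr l h0 hmem
    have ha' : a' ∈ Jid A r l.val := by
      apply ih a' ?_ hm
      apply degW_le
      intro μ hμ
      have h1 := hs μ hμ
      have h2 : degW w a ≤ N + 1 := hN
      omega
    have hsplit : a = (a + a') + a' := by
      have hpa := pp a'
      linear_combination -hpa
    rw [hsplit]
    exact Ideal.add_mem _ hsum ha'

end Main

section Generic

lemma ideal_smul_top {R : Type*} [CommRing R] (I : Ideal R) :
    I • (⊤ : Submodule R R) = I := by
  apply le_antisymm
  · apply Submodule.smul_le.mpr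
    intro r hr n _
    exact I.mul_mem_right n hr
  · intro x hx
    rw [← mul_one x]
    exact Submodule.smul_mem_smul hx Submodule.mem_top

lemma isSMulRegular_quot {R : Type*} [CommRing R] {I : Ideal R} {x : R}
    (h : ∀ a, x * a ∈ I → a ∈ I) :
    IsSMulRegular (R ⧸ (I • ⊤ : Submodule R R)) x := by
  intro p q hpq
  obtain ⟨a, rfl⟩ := Submodule.Quotient.mk_surjective _ p
  obtain ⟨b, rfl⟩ := Submodule.Quotient.mk_surjective _ q
  have hpq' : x • (Submodule.Quotient.mk a : R ⧸ (I • ⊤ : Submodule R R))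
      = x • (Submodule.Quotient.mk b : R ⧸ (I • ⊤ : Submodule R R)) := hpq
  rw [← Submodule.Quotient.mk_smul, ← Submodule.Quotient.mk_smul, Submodule.Quotient.eq,
    ideal_smul_top, smul_eq_mul, smul_eq_mul, ← mul_sub] at hpq'
  rw [Submodule.Quotient.eq, ideal_smul_top]
  exact h _ hpq'

lemma key_ineq {i l M : ℕ} (him : i < M) (hlm : l < M) (hne : i ≠ l) :
    3 * (2 ^ M - 2 ^ i) + 2 ^ l * (2 * i) < 3 * (2 ^ M - 2 ^ l) + 2 ^ l * (2 * l) := by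
  have hi2 : 2 ^ i ≤ 2 ^ M := Nat.pow_le_pow_right (by norm_num) him.le
  have hl2 : 2 ^ l ≤ 2 ^ M := Nat.pow_le_pow_right (by norm_num) hlm.le
  have key : 3 * 2 ^ l + 2 ^ l * (2 * i) < 3 * 2 ^ i + 2 ^ l * (2 * l) := by
    rcases Nat.lt_or_ge i l with hil | hge
    · obtain ⟨δ, rfl⟩ : ∃ δ, l = i + (δ + 1) := ⟨l - i - 1, by omega⟩
      have hp : 2 ^ (i + (δ + 1)) = 2 ^ i * (2 * 2 ^ δ) := by
        rw [pow_add, pow_succ]; ring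
      rw [hp]
      have hQ : 1 ≤ 2 ^ δ := Nat.one_le_two_pow
      have ha : 1 ≤ 2 ^ i := Nat.one_le_two_pow
      rcases Nat.eq_zero_or_pos δ with h0 | h1
      · subst h0
        have hX : 2 ^ i * (2 * 2 ^ 0) = 2 * 2 ^ i := by ring
        rw [hX]
        nlinarith [ha]
      · have h6 : 2 ^ i * (2 * 2 ^ δ) * 4 ≤ 2 ^ i * (2 * 2 ^ δ) * (2 * (δ + 1)) :=
          Nat.mul_le_mul_left _ (by omega)
        have hX1 : 1 ≤ 2 ^ i * (2 * 2 ^ δ) := Nat.one_le_iff_ne_zero.mpr (by positivity)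
        calc 3 * (2 ^ i * (2 * 2 ^ δ)) + 2 ^ i * (2 * 2 ^ δ) * (2 * i)
            < 3 * 2 ^ i + 2 ^ i * (2 * 2 ^ δ) * (2 * i) + 2 ^ i * (2 * 2 ^ δ) * 4 := by
              omega
          _ ≤ 3 * 2 ^ i + 2 ^ i * (2 * 2 ^ δ) * (2 * i)
              + 2 ^ i * (2 * 2 ^ δ) * (2 * (δ + 1)) := by omega
          _ = 3 * 2 ^ i + 2 ^ i * (2 * 2 ^ δ) * (2 * (i + (δ + 1))) := by ring
    · have hil : l < i := by omega
      obtain ⟨δ, rfl⟩ : ∃ δ, i = l + (δ + 1) := ⟨i - l - 1, by omega⟩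
      have hp : 2 ^ (l + (δ + 1)) = 2 ^ l * (2 * 2 ^ δ) := by
        rw [pow_add, pow_succ]; ring
      rw [hp]
      have h2 : 2 ^ l * (2 * (δ + 1)) ≤ 2 ^ l * (2 * 2 ^ δ) := Nat.mul_le_mul_left _ (by
        have : δ < 2 ^ δ := Nat.lt_two_pow_self; omega)
      have h8 : 2 ^ l * 2 ≤ 2 ^ l * (2 * 2 ^ δ) := Nat.mul_le_mul_left _ (by
        have := Nat.one_le_two_pow (n := δ); omega)
      have hb1 : 1 ≤ 2 ^ l := Nat.one_le_two_pow
      calc 3 * 2 ^ l + 2 ^ l * (2 * (l + (δ + 1)))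
          = 3 * 2 ^ l + 2 ^ l * (2 * l) + 2 ^ l * (2 * (δ + 1)) := by ring
        _ < 3 * (2 ^ l * (2 * 2 ^ δ)) + 2 ^ l * (2 * l) := by omega
  omega

end Generic

section Inst

variable (m : ℕ)

/-- The weight function. -/
noncomputable def wt : (Fin m ⊕ Fin m) → ℕ :=
  Sum.elim (fun i => 3 * (2 ^ m - 2 ^ (i : ℕ))) (fun i => 2 * (i : ℕ))

/-- Exponents of the leading monomials. -/
noncomputable def Am (l : Fin m) : ((Fin m ⊕ Fin m) →₀ ℕ) :=
  Finsupp.single (Sum.inl l) 1 + Finsupp.single (Sum.inr l) (2 ^ (l : ℕ))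

/-- The tails. -/
noncomputable def rm (l : Fin m) : MvPolynomial (Fin m ⊕ Fin m) (ZMod 2) :=
  ∑ i ∈ Finset.univ.erase l, X (Sum.inl i) * X (Sum.inr i) ^ (2 ^ (l : ℕ))

lemma mon_eq (i : Fin m) (k : ℕ) :
    (X (Sum.inl i) : MvPolynomial (Fin m ⊕ Fin m) (ZMod 2)) * X (Sum.inr i) ^ k
      = monomial (Finsupp.single (Sum.inl i) 1 + Finsupp.single (Sum.inr i) k) 1 := by
  rw [X_pow_eq_monomial, X, monomial_mul, one_mul]

lemma f_eq (l : Fin m) :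
    (∑ i : Fin m,
      (X (Sum.inl i) : MvPolynomial (Fin m ⊕ Fin m) (ZMod 2)) * X (Sum.inr i) ^ (2 ^ (l : ℕ)))
      = tmon (Am m) l + rm m l := by
  rw [← Finset.add_sum_erase Finset.univ
    (fun i => (X (Sum.inl i) : MvPolynomial (Fin m ⊕ Fin m) (ZMod 2))
      * X (Sum.inr i) ^ (2 ^ (l : ℕ))) (Finset.mem_univ l), ← rm, tmon, Am, mon_eq]

lemma weight_single_wt (s : Fin m ⊕ Fin m) (n : ℕ) :
    Finsupp.weight (wt m) (Finsupp.single s n) = n * wt m s := by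
  rw [Finsupp.weight_apply, Finsupp.sum_single_index] <;> simp

lemma weight_pair (i : Fin m) (k : ℕ) :
    Finsupp.weight (wt m) (Finsupp.single (Sum.inl i) 1 + Finsupp.single (Sum.inr i) k)
      = 3 * (2 ^ m - 2 ^ (i : ℕ)) + k * (2 * (i : ℕ)) := by
  rw [map_add, weight_single_wt, weight_single_wt]
  simp [wt]

lemma Am_supp (l : Fin m) :
    (Am m l).support ⊆ {Sum.inl l, Sum.inr l} := by
  rw [Am]
  refine subset_trans Finsupp.support_add ?_
  intro x hx
  rcases Finset.mem_union.mp hx with h | h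
  · have := Finsupp.support_single_subset h
    simp only [Finset.mem_singleton] at this
    simp [this]
  · have := Finsupp.support_single_subset h
    simp only [Finset.mem_singleton] at this
    simp [this]

lemma hdis_inst : ∀ i j : Fin m, i ≠ j →
    ∀ x, x ∈ (Am m i).support → x ∉ (Am m j).support := by
  intro i j hne x hxi hxj
  have h1 := Am_supp m i hxi
  have h2 := Am_supp m j hxj
  simp only [Finset.mem_insert, Finset.mem_singleton] at h1 h2
  rcases h1 with rfl | rfl <;> rcases h2 with h | h <;> simp_all

lemma hr_inst : ∀ l : Fin m, ∀ ρ ∈ (rm m l).support,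
    Finsupp.weight (wt m) ρ < Finsupp.weight (wt m) (Am m l) := by
  intro l ρ hρ
  rw [rm] at hρ
  obtain ⟨i, hit, hi⟩ : ∃ i ∈ Finset.univ.erase l,
      ρ ∈ ((X (Sum.inl i) : MvPolynomial (Fin m ⊕ Fin m) (ZMod 2))
        * X (Sum.inr i) ^ (2 ^ (l : ℕ))).support := by
    simpa [Finset.mem_biUnion] using support_sum hρ
  rw [mon_eq] at hi
  have hρ' : ρ = Finsupp.single (Sum.inl i) 1 + Finsupp.single (Sum.inr i) (2 ^ (l : ℕ)) := by
    have := support_monomial_subset hi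
    simpa using this
  subst hρ'
  rw [weight_pair, Am, weight_pair]
  exact key_ineq i.isLt l.isLt
    (fun hc => (Finset.mem_erase.mp hit).1 (Fin.ext hc))

end Inst

end Stmt16

open MvPolynomial

/-- In `𝔽₂[x₁,…,xₘ,y₁,…,yₘ]`, the sequence `Σᵢ xᵢyᵢ, Σᵢ xᵢyᵢ², Σᵢ xᵢyᵢ⁴, …,
`Σᵢ xᵢyᵢ^{2^{m-1}}` is a regular sequence of length `m`. -/
theorem stmt16 (m : ℕ) :
    RingTheory.Sequence.IsRegular (MvPolynomial (Fin m ⊕ Fin m) (ZMod 2))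
      (List.ofFn fun l : Fin m =>
        ∑ i : Fin m,
          (X (Sum.inl i) : MvPolynomial (Fin m ⊕ Fin m) (ZMod 2)) *
            X (Sum.inr i) ^ (2 ^ l.val)) := by
  classical
  set F : Fin m → MvPolynomial (Fin m ⊕ Fin m) (ZMod 2) := fun l =>
    ∑ i : Fin m, (X (Sum.inl i) : MvPolynomial (Fin m ⊕ Fin m) (ZMod 2))
      * X (Sum.inr i) ^ (2 ^ l.val) with hF
  have hFdef : ∀ l : Fin m, F l = Stmt16.tmon (Stmt16.Am m) l + Stmt16.rm m l :=
    fun l => Stmt16.f_eq m l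
  rw [RingTheory.Sequence.isRegular_iff]
  constructor
  · refine ⟨fun i hi => ?_⟩
    have him : i < m := by simpa using hi
    have hof : Ideal.ofList ((List.ofFn F).take i) = Stmt16.Jid (Stmt16.Am m) (Stmt16.rm m) i := by
      rw [Stmt16.Jid]
      apply congrArg Ideal.span
      ext q
      simp only [Set.mem_setOf_eq]
      constructor
      · intro hq
        rw [List.mem_take_iff_getElem] at hq
        obtain ⟨k, hk, he⟩ := hq
        simp only [List.length_ofFn, List.getElem_ofFn] at hk he
        have hkm : k < m := by omega
        refine ⟨⟨k, hkm⟩, by simp; omega, ?_⟩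
        rw [← he, ← hFdef]
      · rintro ⟨j, hj, rfl⟩
        rw [List.mem_take_iff_getElem]
        refine ⟨j.val, by simp; omega, ?_⟩
        simp only [List.getElem_ofFn]
        rw [← hFdef]
    have hget : (List.ofFn F)[i] = F ⟨i, him⟩ := by
      simp [List.getElem_ofFn]
    rw [hget]
    apply Stmt16.isSMulRegular_quot
    intro a ha
    rw [hof] at ha ⊢
    have hreg := Stmt16.reg (Stmt16.wt m) (Stmt16.Am m) (Stmt16.rm m)
      (Stmt16.hdis_inst m) (Stmt16.hr_inst m) ⟨i, him⟩
      (Stmt16.degW (Stmt16.wt m) a) a le_rfl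
    apply hreg
    rw [← hFdef, mul_comm]
    exact ha
  · intro heq
    rw [Stmt16.ideal_smul_top] at heq
    have h1 : (1 : MvPolynomial (Fin m ⊕ Fin m) (ZMod 2)) ∈ Ideal.ofList (List.ofFn F) := by
      rw [← heq]; trivial
    have h2 : Ideal.ofList (List.ofFn F)
        ≤ RingHom.ker (constantCoeff (σ := Fin m ⊕ Fin m) (R := ZMod 2)) := by
      apply Ideal.span_le.mpr
      intro q hq
      have hq' : q ∈ List.ofFn F := hq
      rw [List.mem_ofFn] at hq'
      obtain ⟨l, rfl⟩ := hq'
      rw [SetLike.mem_coe, RingHom.mem_ker, hF]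
      simp
    have h3 := h2 h1
    rw [RingHom.mem_ker, map_one] at h3
    exact one_ne_zero h3
end
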